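/- arXiv:2412.04241 — 9 statements merged into one kernel-verified Lean document; each statement's English description precedes it below -/
import Mathlib

section
/- Let A be a nonzero integer. There is a unique power series z(t) ∈ ℚ[[t]] with constant term z(0) = 1 satisfying 1 − z(t) = (−1)^A t · z(t)^A (for negative A the power z(t)^A uses that z(t) is invertible). This solution is given by the hypergeometric series z(t) = ∑_{k≥0} (−1)^{(A+1)k} (1/((A−1)k+1)) · C(Ak,k) · t^k, where C(Ak,k) := Ak(Ak−1)⋯(Ak−k+1)/k! is the generalized binomial coefficient; in particular z(t) ∈ ℤ[[t]]. Moreover log z(t) = ∑_{k≥1} (−1)^{(A+1)k} (1/(Ak)) · C(Ak,k) · t^k. -/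
/-!
STATEMENT 4: For a nonzero integer `A`, there is a unique power series `z ∈ ℚ[[t]]` with
`z(0) = 1` and `1 - z = (-1)^A t z^A` (for negative `A` using that `z` is invertible);
it is given by the hypergeometric series
`z(t) = ∑_{k≥0} (-1)^{(A+1)k} C(Ak,k)/((A-1)k+1) t^k`, has integer coefficients, and
`log z(t) = ∑_{k≥1} (-1)^{(A+1)k} C(Ak,k)/(Ak) t^k`.
-/

/-- The formal logarithm `log F = ∑_{k ≥ 1} (-1)^{k+1}(F-1)^k/k`, coefficientwise. -/
noncomputable def plogQ (F : PowerSeries ℚ) : PowerSeries ℚ :=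
  PowerSeries.mk fun b => ∑ k ∈ Finset.Icc 1 b,
    ((-1 : ℚ) ^ (k + 1) / k) * PowerSeries.coeff b ((F - 1) ^ k)

/-- The generalized binomial coefficient `C(Ak, k) = Ak(Ak-1)⋯(Ak-k+1)/k!`. -/
noncomputable def genBinom (A : ℤ) (k : ℕ) : ℚ :=
  (∏ i ∈ Finset.range k, ((A * (k : ℤ) - (i : ℤ) : ℤ) : ℚ)) / (k.factorial : ℚ)

/-- `z` (a unit of `ℚ[[t]]`) has constant term `1` and satisfies
`1 - z = (-1)^A t z^A`. -/
def IsNahmSol (A : ℤ) (z : (PowerSeries ℚ)ˣ) : Prop :=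
  PowerSeries.constantCoeff (z : PowerSeries ℚ) = 1 ∧
  1 - (z : PowerSeries ℚ) =
    PowerSeries.C ((-1 : ℚ) ^ A) *
      (PowerSeries.X * ((z ^ A : (PowerSeries ℚ)ˣ) : PowerSeries ℚ))

open PowerSeries Finset

namespace S4

/-- descending product `x(x-1)⋯(x-k+1)` as a rational. -/
noncomputable def prodq (x : ℤ) (k : ℕ) : ℚ := ∏ i ∈ range k, ((x - i : ℤ) : ℚ)

lemma prodq_zero (x : ℤ) : prodq x 0 = 1 := by simp [prodq]

lemma prodq_succ (x : ℤ) (k : ℕ) : prodq x (k+1) = prodq x k * ((x : ℚ) - k) := by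
  rw [prodq, prod_range_succ, ← prodq]
  push_cast
  ring

lemma prodq_succ' (x : ℤ) (k : ℕ) : prodq x (k+1) = (x : ℚ) * prodq (x-1) k := by
  rw [prodq, prod_range_succ', mul_comm]
  congr 1
  · push_cast; ring
  · rw [prodq]
    apply prod_congr rfl
    intro i _
    push_cast
    ring

/-- the polynomial `m ↦ [t^n] z^m`, normalized: `Pf A n m = m(An+m-1)⋯(An+m-n+1)/n!`. -/
noncomputable def Pf (A : ℤ) (n : ℕ) (m : ℤ) : ℚ :=
  if n = 0 then 1 else (m : ℚ) * prodq (A*n + m - 1) (n-1) / n.factorial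

lemma Pf_zero (A : ℤ) (m : ℤ) : Pf A 0 m = 1 := by simp [Pf]

lemma Pf_succ (A : ℤ) (n : ℕ) (m : ℤ) :
    Pf A (n+1) m = (m : ℚ) * prodq (A*(n+1) + m - 1) n / (n+1).factorial := by
  simp [Pf]

lemma Pf_apply_zero (A : ℤ) (n : ℕ) (hn : n ≠ 0) : Pf A n 0 = 0 := by
  simp [Pf, hn]

/-- The key polynomial identity `P_n(m+1) = P_n(m) + P_{n-1}(m+A)`. -/
lemma Pf_id (A : ℤ) (n : ℕ) (m : ℤ) (hn : n ≠ 0) :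
    Pf A n (m+1) = Pf A n m + Pf A (n-1) (m+A) := by
  obtain ⟨k, rfl⟩ := Nat.exists_eq_succ_of_ne_zero hn
  simp only [Nat.succ_sub_one]
  cases k with
  | zero =>
    simp [Pf, prodq_zero]
    try push_cast
    try ring
  | succ j =>
    rw [Pf_succ, Pf_succ, Pf_succ]
    have h1 : A*((j:ℤ)+1+1) + (m+1) - 1 = (A*((j:ℤ)+1+1) + m - 1) + 1 := by ring
    have h2 : A*((j:ℤ)+1) + (m+A) - 1 = A*((j:ℤ)+1+1) + m - 1 := by ring
    set X : ℤ := A*((j:ℤ)+1+1) + m - 1 with hX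
    have e1 : prodq (X+1) (j+1) = ((X:ℚ)+1) * prodq X j := by
      have := prodq_succ' (X+1) j
      simpa using this
    have e2 : prodq X (j+1) = prodq X j * ((X:ℚ) - j) := prodq_succ X j
    push_cast at h1 h2 ⊢
    rw [h1, h2, e1, e2]
    have hf1 : ((j+1+1).factorial : ℚ) = (j+1+1) * (j+1).factorial := by
      push_cast [Nat.factorial_succ]; ring
    have hf0 : ((j+1).factorial : ℚ) ≠ 0 := by positivity
    have hf0' : ((j+1+1).factorial : ℚ) ≠ 0 := by positivity
    rw [hf1]
    field_simp [hf1]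
    push_cast [hX]
    ring

/-- `prodq x k / k!` is an integer (generalized binomial coefficients are integers). -/
lemma prodq_div_factorial_int (k : ℕ) : ∀ x : ℤ, ∃ c : ℤ, prodq x k / k.factorial = c := by
  induction k with
  | zero => intro x; exact ⟨1, by simp [prodq_zero]⟩
  | succ k ih =>
    have pascal : ∀ x : ℤ, prodq (x+1) (k+1) / (k+1).factorial
        = prodq x (k+1) / (k+1).factorial + prodq x k / k.factorial := by
      intro x
      have e1 : prodq (x+1) (k+1) = ((x:ℚ)+1) * prodq x k := by
        have := prodq_succ' (x+1) k; simpa using this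
      have e2 : prodq x (k+1) = prodq x k * ((x:ℚ) - k) := prodq_succ x k
      have hf1 : ((k+1).factorial : ℚ) = (k+1) * k.factorial := by
        push_cast [Nat.factorial_succ]; ring
      have hk : (k.factorial : ℚ) ≠ 0 := by positivity
      rw [e1, e2, hf1]
      field_simp
      ring
    have base : ∃ c : ℤ, prodq 0 (k+1) / (k+1).factorial = c := by
      refine ⟨0, ?_⟩
      have : prodq 0 (k+1) = 0 := by
        rw [prodq]
        apply prod_eq_zero (mem_range.2 (Nat.succ_pos k))
        simp
      simp [this]
    intro x
    induction x using Int.induction_on with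
    | zero => exact base
    | succ i hi =>
      obtain ⟨c, hc⟩ := hi
      obtain ⟨d, hd⟩ := ih i
      exact ⟨c + d, by rw [pascal i, hc, hd]; push_cast; ring⟩
    | pred i hi =>
      obtain ⟨c, hc⟩ := hi
      obtain ⟨d, hd⟩ := ih (-(i:ℤ) - 1)
      refine ⟨c - d, ?_⟩
      have hp := pascal (-(i:ℤ) - 1)
      rw [sub_add_cancel, hc, hd] at hp
      push_cast
      linarith



/-- coeff of product where first factor vanishes below n -/
lemma coeff_mul_ord (n : ℕ) (p q : PowerSeries ℚ) (hp : ∀ i < n, PowerSeries.coeff i p = 0) :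
    PowerSeries.coeff n (p * q) = PowerSeries.coeff n p * PowerSeries.constantCoeff q := by
  rw [PowerSeries.coeff_mul]
  rw [Finset.sum_eq_single (n, 0)]
  · simp [PowerSeries.coeff_zero_eq_constantCoeff]
  · rintro ⟨a, b⟩ hab hne
    rw [Finset.HasAntidiagonal.mem_antidiagonal] at hab
    have ha : a < n := by
      rcases lt_or_eq_of_le (Nat.le.intro hab) with h | h
      · exact h
      · exfalso; apply hne; simp at hab ⊢; omega
    simp [hp a ha]
  · intro h
    exfalso; apply h; simp [Finset.mem_antidiagonal]

/-- Key lemma: the n-th coefficient of `f^k` depends on coefficients `< n` plus `k·(coeff n f)`. -/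
lemma keyL (n k : ℕ) (f g : PowerSeries ℚ)
    (hf : PowerSeries.constantCoeff f = 1) (hg : PowerSeries.constantCoeff g = 1)
    (h : ∀ i < n, PowerSeries.coeff i f = PowerSeries.coeff i g) :
    PowerSeries.coeff n (f ^ k) - PowerSeries.coeff n (g ^ k)
      = k * (PowerSeries.coeff n f - PowerSeries.coeff n g) := by
  have key : f ^ k - g ^ k = (f - g) * (∑ i ∈ range k, f ^ i * g ^ (k - 1 - i)) := by
    rw [mul_comm, geom_sum₂_mul]
  have h2 : PowerSeries.coeff n (f ^ k - g ^ k)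
      = PowerSeries.coeff n (f - g) * PowerSeries.constantCoeff (∑ i ∈ range k, f ^ i * g ^ (k - 1 - i)) := by
    rw [key]
    apply coeff_mul_ord
    intro i hi
    simp [h i hi]
  have h3 : PowerSeries.constantCoeff (∑ i ∈ range k, f ^ i * g ^ (k - 1 - i)) = k := by
    rw [map_sum]
    have : ∀ i ∈ range k, PowerSeries.constantCoeff (f ^ i * g ^ (k - 1 - i)) = 1 := by
      intro i _
      rw [map_mul, map_pow, map_pow, hf, hg, one_pow, one_pow, one_mul]
    rw [Finset.sum_congr rfl this]
    simp
  rw [map_sub] at h2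
  rw [h2, h3, map_sub]
  ring

variable (A : ℤ)

/-- the exponent `B = max(0, -A)`. -/
def Bn : ℕ := (-A).toNat

/-- the exponent `M = A + B = max(0, A)`. -/
def Mn : ℕ := (A + (Bn A : ℤ)).toNat

lemma hMn : ((Mn A : ℤ)) = A + (Bn A : ℤ) := by
  rw [Mn]
  apply Int.toNat_of_nonneg
  have : (-A) ≤ ((-A).toNat : ℤ) := Int.self_le_toNat _
  rw [Bn]
  omega

/-- the recursively defined coefficients of the solution. -/
noncomputable def zc : ℕ → ℚ
  | 0 => 1
  | (n+1) =>
    PowerSeries.coeff (n+1)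
        ((PowerSeries.mk fun i => if h : i < n + 1 then zc i else 0) ^ (Bn A)
          - (PowerSeries.mk fun i => if h : i < n + 1 then zc i else 0) ^ (Bn A + 1))
      - (-1:ℚ)^A * PowerSeries.coeff n
          ((PowerSeries.mk fun i => if h : i < n + 1 then zc i else 0) ^ (Mn A))
  decreasing_by all_goals exact h



/-- the truncated series used in the recursion. -/
noncomputable def ytr (n : ℕ) : PowerSeries ℚ :=
  PowerSeries.mk fun i => if i < n then zc A i else 0

/-- the candidate solution series. -/
noncomputable def zser : PowerSeries ℚ := PowerSeries.mk (zc A)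

lemma zc_succ (n : ℕ) : zc A (n+1) =
    PowerSeries.coeff (n+1) ((ytr A (n+1)) ^ (Bn A) - (ytr A (n+1)) ^ (Bn A + 1))
      - (-1:ℚ)^A * PowerSeries.coeff n ((ytr A (n+1)) ^ (Mn A)) := by
  rw [zc, ytr]
  simp only [dite_eq_ite]

lemma const_zser : PowerSeries.constantCoeff (zser A) = 1 := by
  rw [← PowerSeries.coeff_zero_eq_constantCoeff_apply, zser, PowerSeries.coeff_mk, zc]

lemma const_ytr (n : ℕ) (hn : 0 < n) : PowerSeries.constantCoeff (ytr A n) = 1 := by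
  rw [← PowerSeries.coeff_zero_eq_constantCoeff_apply, ytr, PowerSeries.coeff_mk, if_pos hn, zc]

lemma agree_ytr (n : ℕ) : ∀ i < n, PowerSeries.coeff i (zser A) = PowerSeries.coeff i (ytr A n) := by
  intro i hi
  rw [zser, ytr, PowerSeries.coeff_mk, PowerSeries.coeff_mk, if_pos hi]

/-- the polynomial form of the functional equation for the constructed series. -/
lemma zser_eq : (zser A) ^ (Bn A) - (zser A) ^ (Bn A + 1)
    = PowerSeries.C ((-1:ℚ)^A) * (PowerSeries.X * (zser A) ^ (Mn A)) := by
  ext n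
  cases n with
  | zero =>
    simp only [PowerSeries.coeff_zero_eq_constantCoeff_apply, map_sub, map_mul, map_pow,
      const_zser, PowerSeries.constantCoeff_X, PowerSeries.constantCoeff_C]
    ring
  | succ n =>
    have hy := const_ytr A (n+1) (Nat.succ_pos n)
    have hagree := agree_ytr A (n+1)
    have hB := keyL (n+1) (Bn A) (zser A) (ytr A (n+1)) (const_zser A) hy hagree
    have hB1 := keyL (n+1) (Bn A + 1) (zser A) (ytr A (n+1)) (const_zser A) hy hagree
    have hM := keyL n (Mn A) (zser A) (ytr A (n+1)) (const_zser A) hy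
      (fun i hi => hagree i (Nat.lt_succ_of_lt hi))
    have hyz : PowerSeries.coeff (n+1) (ytr A (n+1)) = 0 := by
      rw [ytr, PowerSeries.coeff_mk, if_neg (lt_irrefl (n+1))]
    have hzn : PowerSeries.coeff (n+1) (zser A) = zc A (n+1) := by
      rw [zser, PowerSeries.coeff_mk]
    have hMn' : PowerSeries.coeff n (zser A) - PowerSeries.coeff n (ytr A (n+1)) = 0 := by
      rw [hagree n (Nat.lt_succ_self n)]; ring
    rw [hMn', mul_zero, sub_eq_zero] at hM
    have hrhs : PowerSeries.coeff (n+1)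
        (PowerSeries.C ((-1:ℚ)^A) * (PowerSeries.X * (zser A) ^ (Mn A)))
        = (-1:ℚ)^A * PowerSeries.coeff n ((zser A) ^ (Mn A)) := by
      rw [PowerSeries.coeff_C_mul, PowerSeries.coeff_succ_X_mul]
    rw [map_sub, hrhs, hM]
    have hz := zc_succ A n
    rw [map_sub] at hz
    rw [hyz, hzn] at hB hB1
    -- hB : coeff (n+1) (zser^B) - coeff (n+1) (ytr^B) = B * (zc (n+1) - 0)
    push_cast at hB hB1
    have : (Bn A + 1 : ℚ) * (zc A (n+1) - 0) = (Bn A : ℚ) * (zc A (n+1) - 0) + zc A (n+1) := by ring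
    linarith [hB, hB1, hz]


/-- the solution as a unit. -/
noncomputable def zunit : (PowerSeries ℚ)ˣ :=
  Units.mkOfMulEqOne (zser A) (zser A)⁻¹
    (PowerSeries.mul_inv_cancel _ (by rw [const_zser]; exact one_ne_zero))

lemma zunit_val : ((zunit A : (PowerSeries ℚ)ˣ) : PowerSeries ℚ) = zser A := rfl

/-- equivalence of the unit equation with the polynomial form. -/
lemma sol_iff (z : (PowerSeries ℚ)ˣ) :
    (1 - (z : PowerSeries ℚ) = PowerSeries.C ((-1 : ℚ) ^ A) *
      (PowerSeries.X * ((z ^ A : (PowerSeries ℚ)ˣ) : PowerSeries ℚ)))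
    ↔ ((z : PowerSeries ℚ) ^ (Bn A) - (z : PowerSeries ℚ) ^ (Bn A + 1)
        = PowerSeries.C ((-1:ℚ)^A) * (PowerSeries.X * (z : PowerSeries ℚ) ^ (Mn A))) := by
  have hpows : ((z ^ A : (PowerSeries ℚ)ˣ) : PowerSeries ℚ) * (z : PowerSeries ℚ) ^ (Bn A)
      = (z : PowerSeries ℚ) ^ (Mn A) := by
    have : (z : PowerSeries ℚ) ^ (Bn A) = ((z ^ ((Bn A : ℤ)) : (PowerSeries ℚ)ˣ) : PowerSeries ℚ) := by
      rw [zpow_natCast, Units.val_pow_eq_pow_val]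
    rw [this, ← Units.val_mul, ← zpow_add, ← hMn A, zpow_natCast, Units.val_pow_eq_pow_val]
  constructor
  · intro h
    have := congrArg (fun w => w * (z : PowerSeries ℚ) ^ (Bn A)) h
    calc (z : PowerSeries ℚ) ^ (Bn A) - (z : PowerSeries ℚ) ^ (Bn A + 1)
        = (1 - (z : PowerSeries ℚ)) * (z : PowerSeries ℚ) ^ (Bn A) := by ring
      _ = PowerSeries.C ((-1:ℚ)^A) * (PowerSeries.X * (((z ^ A : (PowerSeries ℚ)ˣ) : PowerSeries ℚ) * (z : PowerSeries ℚ) ^ (Bn A))) := by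
          rw [this]; ring
      _ = PowerSeries.C ((-1:ℚ)^A) * (PowerSeries.X * (z : PowerSeries ℚ) ^ (Mn A)) := by rw [hpows]
  · intro h
    have hne : (z : PowerSeries ℚ) ^ (Bn A) ≠ 0 := pow_ne_zero _ z.ne_zero
    apply mul_right_cancel₀ hne
    calc (1 - (z : PowerSeries ℚ)) * (z : PowerSeries ℚ) ^ (Bn A)
        = (z : PowerSeries ℚ) ^ (Bn A) - (z : PowerSeries ℚ) ^ (Bn A + 1) := by ring
      _ = PowerSeries.C ((-1:ℚ)^A) * (PowerSeries.X * (z : PowerSeries ℚ) ^ (Mn A)) := h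
      _ = PowerSeries.C ((-1:ℚ)^A) * (PowerSeries.X * (((z ^ A : (PowerSeries ℚ)ˣ) : PowerSeries ℚ) * (z : PowerSeries ℚ) ^ (Bn A))) := by rw [hpows]
      _ = PowerSeries.C ((-1:ℚ)^A) * (PowerSeries.X * ((z ^ A : (PowerSeries ℚ)ˣ) : PowerSeries ℚ)) * (z : PowerSeries ℚ) ^ (Bn A) := by ring

/-- uniqueness. -/
lemma sol_unique (z w : (PowerSeries ℚ)ˣ)
    (hz0 : PowerSeries.constantCoeff (z : PowerSeries ℚ) = 1)
    (hw0 : PowerSeries.constantCoeff (w : PowerSeries ℚ) = 1)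
    (hz : (z : PowerSeries ℚ) ^ (Bn A) - (z : PowerSeries ℚ) ^ (Bn A + 1)
        = PowerSeries.C ((-1:ℚ)^A) * (PowerSeries.X * (z : PowerSeries ℚ) ^ (Mn A)))
    (hw : (w : PowerSeries ℚ) ^ (Bn A) - (w : PowerSeries ℚ) ^ (Bn A + 1)
        = PowerSeries.C ((-1:ℚ)^A) * (PowerSeries.X * (w : PowerSeries ℚ) ^ (Mn A))) :
    z = w := by
  have main : ∀ n, PowerSeries.coeff n (z : PowerSeries ℚ) = PowerSeries.coeff n (w : PowerSeries ℚ) := by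
    intro n
    induction n using Nat.strong_induction_on with
    | _ n ih =>
      cases n with
      | zero =>
        simp only [PowerSeries.coeff_zero_eq_constantCoeff_apply, hz0, hw0]
      | succ n =>
        have hB := keyL (n+1) (Bn A) (z : PowerSeries ℚ) (w : PowerSeries ℚ) hz0 hw0 (fun i hi => ih i hi)
        have hB1 := keyL (n+1) (Bn A + 1) (z : PowerSeries ℚ) (w : PowerSeries ℚ) hz0 hw0 (fun i hi => ih i hi)
        have hM := keyL n (Mn A) (z : PowerSeries ℚ) (w : PowerSeries ℚ) hz0 hw0
          (fun i hi => ih i (Nat.lt_succ_of_lt hi))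
        rw [ih n (Nat.lt_succ_self n), sub_self, mul_zero, sub_eq_zero] at hM
        have hcz := congrArg (PowerSeries.coeff (n+1)) hz
        have hcw := congrArg (PowerSeries.coeff (n+1)) hw
        rw [map_sub, PowerSeries.coeff_C_mul, PowerSeries.coeff_succ_X_mul] at hcz hcw
        rw [hM] at hcz
        push_cast at hB hB1
        have h2 : (Bn A + 1 : ℚ) * (PowerSeries.coeff (n+1) (z : PowerSeries ℚ) - PowerSeries.coeff (n+1) (w : PowerSeries ℚ))
            = (Bn A : ℚ) * (PowerSeries.coeff (n+1) (z : PowerSeries ℚ) - PowerSeries.coeff (n+1) (w : PowerSeries ℚ))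
              + (PowerSeries.coeff (n+1) (z : PowerSeries ℚ) - PowerSeries.coeff (n+1) (w : PowerSeries ℚ)) := by ring
        linarith [hB, hB1, hcz, hcw, h2]
  exact Units.ext (PowerSeries.ext main)


/-- the sign `(-1)^((A+1)n)`. -/
noncomputable def sgn (n : ℕ) : ℚ := (-1 : ℚ) ^ ((A + 1) * (n : ℤ))

lemma sgn_zero : sgn A 0 = 1 := by simp [sgn]

lemma neg_one_zpow_ne (j : ℤ) : (-1 : ℚ) ^ j ≠ 0 := by
  apply zpow_ne_zero; norm_num

lemma sgn_succ (n : ℕ) : sgn A (n+1) = sgn A n * (-1 : ℚ) ^ (A + 1) := by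
  rw [sgn, sgn]
  push_cast
  rw [mul_add, mul_one, zpow_add₀ (by norm_num : (-1:ℚ) ≠ 0)]


/-- main coefficient formula for integer powers of a solution. -/
lemma coeff_zpow (z : (PowerSeries ℚ)ˣ)
    (h0 : PowerSeries.constantCoeff (z : PowerSeries ℚ) = 1)
    (heq : 1 - (z : PowerSeries ℚ) = PowerSeries.C ((-1 : ℚ) ^ A) *
      (PowerSeries.X * ((z ^ A : (PowerSeries ℚ)ˣ) : PowerSeries ℚ))) :
    ∀ n : ℕ, ∀ m : ℤ, PowerSeries.coeff n ((z ^ m : (PowerSeries ℚ)ˣ) : PowerSeries ℚ)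
      = sgn A n * Pf A n m := by
  have const_pow : ∀ m : ℤ, PowerSeries.constantCoeff ((z ^ m : (PowerSeries ℚ)ˣ) : PowerSeries ℚ) = 1 := by
    intro m
    have : (Units.map (PowerSeries.constantCoeff (R := ℚ)).toMonoidHom) z = 1 := by
      apply Units.ext
      simp [h0]
    calc PowerSeries.constantCoeff ((z ^ m : (PowerSeries ℚ)ˣ) : PowerSeries ℚ)
        = ((Units.map (PowerSeries.constantCoeff (R := ℚ)).toMonoidHom (z ^ m) : ℚˣ) : ℚ) := rfl
      _ = (((Units.map (PowerSeries.constantCoeff (R := ℚ)).toMonoidHom z) ^ m : ℚˣ) : ℚ) := by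
          rw [map_zpow]
      _ = 1 := by rw [this, one_zpow, Units.val_one]
  -- the basic recurrence
  have hrec : ∀ (n : ℕ) (m : ℤ), PowerSeries.coeff (n+1) ((z ^ (m+1) : (PowerSeries ℚ)ˣ) : PowerSeries ℚ)
      = PowerSeries.coeff (n+1) ((z ^ m : (PowerSeries ℚ)ˣ) : PowerSeries ℚ)
        - (-1:ℚ)^A * PowerSeries.coeff n ((z ^ (m+A) : (PowerSeries ℚ)ˣ) : PowerSeries ℚ) := by
    intro n m
    have hz : (z : PowerSeries ℚ) = 1 - PowerSeries.C ((-1 : ℚ) ^ A) *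
        (PowerSeries.X * ((z ^ A : (PowerSeries ℚ)ˣ) : PowerSeries ℚ)) := by
      rw [← heq]; ring
    have : ((z ^ (m+1) : (PowerSeries ℚ)ˣ) : PowerSeries ℚ)
        = ((z ^ m : (PowerSeries ℚ)ˣ) : PowerSeries ℚ)
          - PowerSeries.C ((-1 : ℚ) ^ A) * (PowerSeries.X * ((z ^ (m+A) : (PowerSeries ℚ)ˣ) : PowerSeries ℚ)) := by
      calc ((z ^ (m+1) : (PowerSeries ℚ)ˣ) : PowerSeries ℚ)
          = ((z ^ m : (PowerSeries ℚ)ˣ) : PowerSeries ℚ) * (z : PowerSeries ℚ) := by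
            rw [← Units.val_mul, ← zpow_add_one]
        _ = ((z ^ m : (PowerSeries ℚ)ˣ) : PowerSeries ℚ) * (1 - PowerSeries.C ((-1 : ℚ) ^ A) *
              (PowerSeries.X * ((z ^ A : (PowerSeries ℚ)ˣ) : PowerSeries ℚ))) := by rw [← hz]
        _ = ((z ^ m : (PowerSeries ℚ)ˣ) : PowerSeries ℚ)
              - PowerSeries.C ((-1 : ℚ) ^ A) * (PowerSeries.X *
                (((z ^ m : (PowerSeries ℚ)ˣ) : PowerSeries ℚ) * ((z ^ A : (PowerSeries ℚ)ˣ) : PowerSeries ℚ))) := by ring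
        _ = _ := by rw [← Units.val_mul, ← zpow_add]
    rw [this, map_sub, PowerSeries.coeff_C_mul, PowerSeries.coeff_succ_X_mul]
  intro n
  induction n using Nat.strong_induction_on with
  | _ n ih =>
    cases n with
    | zero =>
      intro m
      rw [PowerSeries.coeff_zero_eq_constantCoeff_apply, const_pow, sgn_zero, Pf_zero, mul_one]
    | succ n =>
      intro m
      induction m using Int.induction_on with
      | zero =>
        rw [zpow_zero, Units.val_one, Pf_apply_zero A (n+1) (Nat.succ_ne_zero n)]
        simp
      | succ i hi =>
        rw [hrec n i, hi, ih n (Nat.lt_succ_self n) (i + A),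
          Pf_id A (n+1) i (Nat.succ_ne_zero n)]
        simp only [Nat.succ_sub_one]
        rw [sgn_succ]
        have hsg : (-1:ℚ)^(A+1) = -(-1:ℚ)^A := by
          rw [zpow_add₀ (by norm_num : (-1:ℚ) ≠ 0), zpow_one]; ring
        rw [hsg]
        ring
      | pred i hi =>
        have := hrec n (-(i:ℤ) - 1)
        rw [sub_add_cancel] at this
        rw [hi] at this
        have h2 : PowerSeries.coeff (n+1) ((z ^ (-(i:ℤ) - 1) : (PowerSeries ℚ)ˣ) : PowerSeries ℚ)
            = sgn A (n+1) * Pf A (n+1) (-(i:ℤ)) + (-1:ℚ)^A * (sgn A n * Pf A n (-(i:ℤ) - 1 + A)) := by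
          rw [ih n (Nat.lt_succ_self n) (-(i:ℤ) - 1 + A)] at this
          linarith [this]
        rw [h2]
        have hP := Pf_id A (n+1) (-(i:ℤ) - 1) (Nat.succ_ne_zero n)
        rw [sub_add_cancel] at hP
        simp only [Nat.succ_sub_one] at hP
        rw [hP, sgn_succ]
        have hsg : (-1:ℚ)^(A+1) = -(-1:ℚ)^A := by
          rw [zpow_add₀ (by norm_num : (-1:ℚ) ≠ 0), zpow_one]; ring
        rw [hsg]
        ring


/-- coefficients of powers of `z - 1`. -/
lemma coeff_zsub (z : (PowerSeries ℚ)ˣ)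
    (h0 : PowerSeries.constantCoeff (z : PowerSeries ℚ) = 1)
    (heq : 1 - (z : PowerSeries ℚ) = PowerSeries.C ((-1 : ℚ) ^ A) *
      (PowerSeries.X * ((z ^ A : (PowerSeries ℚ)ˣ) : PowerSeries ℚ)))
    (k b : ℕ) :
    PowerSeries.coeff b (((z : PowerSeries ℚ) - 1) ^ k)
      = if k ≤ b then sgn A b * Pf A (b - k) (A * k) else 0 := by
  have hzs : (z : PowerSeries ℚ) - 1
      = PowerSeries.C (-(-1 : ℚ) ^ A) * (((z ^ A : (PowerSeries ℚ)ˣ) : PowerSeries ℚ) * PowerSeries.X) := by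
    have := heq
    rw [map_neg]
    ring_nf
    ring_nf at this
    linear_combination -this
  have hpow : (((z : PowerSeries ℚ) - 1)) ^ k
      = PowerSeries.C ((-(-1 : ℚ) ^ A) ^ k) * (((z ^ (A * k) : (PowerSeries ℚ)ˣ) : PowerSeries ℚ) * PowerSeries.X ^ k) := by
    rw [hzs, mul_pow, mul_pow, ← map_pow]
    congr 2
    rw [← Units.val_pow_eq_pow_val, ← zpow_natCast (z ^ A) k, ← zpow_mul]
  rw [hpow, PowerSeries.coeff_C_mul, PowerSeries.coeff_mul_X_pow']
  by_cases hk : k ≤ b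
  · rw [if_pos hk, if_pos hk, coeff_zpow A z h0 heq (b - k) (A * k)]
    have hsgn : (-(-1 : ℚ) ^ A) ^ k * sgn A (b - k) = sgn A b := by
      have h1 : (-(-1 : ℚ) ^ A) ^ k = (-1 : ℚ) ^ ((A+1) * (k : ℤ)) := by
        have : -(-1 : ℚ) ^ A = (-1 : ℚ) ^ (A + 1) := by
          rw [zpow_add₀ (by norm_num : (-1:ℚ) ≠ 0), zpow_one]; ring
        rw [this, ← zpow_natCast ((-1:ℚ) ^ (A+1)) k, ← zpow_mul]
      rw [h1, sgn, sgn, ← zpow_add₀ (by norm_num : (-1:ℚ) ≠ 0)]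
      congr 1
      have : ((b - k : ℕ) : ℤ) = (b : ℤ) - (k : ℤ) := by
        exact_mod_cast Int.ofNat_sub hk
      rw [this]
      ring
    rw [← hsgn]
    ring
  · rw [if_neg hk, if_neg hk, mul_zero]


open Polynomial in
/-- the falling-factorial polynomial. -/
noncomputable def Dkp (k : ℕ) : Polynomial ℚ := ∏ i ∈ range k, (Polynomial.X - Polynomial.C (i:ℚ))

open Polynomial in
lemma Dkp_eval_nat (k m : ℕ) : (Dkp k).eval (m : ℚ) = (m.descFactorial k : ℚ) := by
  induction k with
  | zero => simp [Dkp]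
  | succ k ih =>
    rw [Dkp, prod_range_succ, ← Dkp, eval_mul, ih, Nat.descFactorial_succ]
    by_cases hk : m ≤ k
    · have h1 : m.descFactorial (k+1) = 0 := Nat.descFactorial_eq_zero_iff_lt.2 (Nat.lt_succ_of_le hk)
      have h2 : (m.descFactorial k : ℚ) * ((m:ℚ) - k) = 0 ∨ True := Or.inr trivial
      by_cases hmk : m = k
      · subst hmk; simp
      · have hlt : m < k := lt_of_le_of_ne hk hmk
        have : m.descFactorial k = 0 := Nat.descFactorial_eq_zero_iff_lt.2 hlt
        simp [this, Nat.descFactorial_eq_zero_iff_lt.2 (Nat.lt_succ_of_le hk)]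
    · push_neg at hk
      have : ((m - k : ℕ) : ℚ) = (m : ℚ) - k := by
        push_cast [Nat.cast_sub (le_of_lt hk)]; ring
      rw [Nat.cast_mul, this]
      simp
      ring

/-- the Vandermonde-type consequence of the binomial theorem for a solution. -/
lemma binom_sum (z : (PowerSeries ℚ)ˣ)
    (h0 : PowerSeries.constantCoeff (z : PowerSeries ℚ) = 1)
    (heq : 1 - (z : PowerSeries ℚ) = PowerSeries.C ((-1 : ℚ) ^ A) *
      (PowerSeries.X * ((z ^ A : (PowerSeries ℚ)ˣ) : PowerSeries ℚ)))
    (b m : ℕ) (hbm : b ≤ m) :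
    ∑ k ∈ range (b+1), (m.choose k : ℚ) * Pf A (b-k) (A*k) = Pf A b m := by
  have hexp : ((z : PowerSeries ℚ)) ^ m = ∑ k ∈ range (m+1),
      ((z : PowerSeries ℚ) - 1) ^ k * 1 ^ (m - k) * (m.choose k : ℚ⟦X⟧) := by
    have := add_pow ((z : PowerSeries ℚ) - 1) 1 m
    rw [sub_add_cancel] at this
    exact_mod_cast this
  have hcoeff : PowerSeries.coeff b ((z : PowerSeries ℚ) ^ m)
      = ∑ k ∈ range (m+1), (m.choose k : ℚ) * PowerSeries.coeff b (((z : PowerSeries ℚ) - 1) ^ k) := by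
    rw [hexp, map_sum]
    apply Finset.sum_congr rfl
    intro k _
    rw [one_pow, mul_one]
    have : ((m.choose k : ℚ⟦X⟧)) = PowerSeries.C ((m.choose k : ℚ)) := by
      push_cast; simp
    rw [this, mul_comm, PowerSeries.coeff_C_mul]
  have htrunc : ∑ k ∈ range (m+1), (m.choose k : ℚ) * PowerSeries.coeff b (((z : PowerSeries ℚ) - 1) ^ k)
      = ∑ k ∈ range (b+1), (m.choose k : ℚ) * PowerSeries.coeff b (((z : PowerSeries ℚ) - 1) ^ k) := by
    symm
    apply Finset.sum_subset
    · exact Finset.range_subset_range.2 (Nat.succ_le_succ hbm)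
    · intro k _ hk
      rw [Finset.mem_range, not_lt] at hk
      rw [coeff_zsub A z h0 heq k b, if_neg (by omega), mul_zero]
  have hlhs : PowerSeries.coeff b ((z : PowerSeries ℚ) ^ m) = sgn A b * Pf A b m := by
    have : ((z : PowerSeries ℚ)) ^ m = ((z ^ (m : ℤ) : (PowerSeries ℚ)ˣ) : PowerSeries ℚ) := by
      rw [zpow_natCast, Units.val_pow_eq_pow_val]
    rw [this, coeff_zpow A z h0 heq]
  have hterm : ∀ k ∈ range (b+1), (m.choose k : ℚ) * PowerSeries.coeff b (((z : PowerSeries ℚ) - 1) ^ k)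
      = sgn A b * ((m.choose k : ℚ) * Pf A (b-k) (A*k)) := by
    intro k hk
    rw [Finset.mem_range] at hk
    rw [coeff_zsub A z h0 heq k b, if_pos (by omega)]
    ring
  rw [htrunc, Finset.sum_congr rfl hterm, ← Finset.mul_sum] at hcoeff
  rw [hlhs] at hcoeff
  have hs : sgn A b ≠ 0 := by rw [sgn]; exact neg_one_zpow_ne _
  exact (mul_left_cancel₀ hs hcoeff).symm


/-- existence of a solution (no hypothesis on `A` needed). -/
lemma zunit_sol : PowerSeries.constantCoeff ((zunit A : (PowerSeries ℚ)ˣ) : PowerSeries ℚ) = 1 ∧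
    1 - ((zunit A : (PowerSeries ℚ)ˣ) : PowerSeries ℚ) = PowerSeries.C ((-1 : ℚ) ^ A) *
      (PowerSeries.X * ((zunit A ^ A : (PowerSeries ℚ)ˣ) : PowerSeries ℚ)) := by
  constructor
  · rw [zunit_val, const_zser]
  · rw [sol_iff A (zunit A)]
    rw [zunit_val]
    exact zser_eq A

open Polynomial in
/-- the key summation identity for the logarithm. -/
lemma star (b : ℕ) (hb : b ≠ 0) :
    ∑ k ∈ Icc 1 b, ((-1:ℚ)^(k+1)/k) * Pf A (b-k) (A*(k:ℤ))
      = prodq (A*b - 1) (b-1) / b.factorial := by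
  classical
  set F : Polynomial ℚ := ∑ k ∈ range (b+1),
    Polynomial.C (Pf A (b-k) (A*(k:ℤ)) / k.factorial) * Dkp k with hF
  set G : Polynomial ℚ := Polynomial.C ((b.factorial : ℚ))⁻¹ *
    (Polynomial.X * ∏ i ∈ range (b-1), (Polynomial.X + Polynomial.C ((A*b - 1 - i : ℤ) : ℚ))) with hG
  have hFeval : ∀ m : ℕ, b ≤ m → F.eval (m : ℚ) = Pf A b m := by
    intro m hm
    rw [hF, eval_finset_sum]
    have : ∀ k ∈ range (b+1), (Polynomial.C (Pf A (b-k) (A*(k:ℤ)) / k.factorial) * Dkp k).eval (m:ℚ)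
        = (m.choose k : ℚ) * Pf A (b-k) (A*(k:ℤ)) := by
      intro k _
      rw [eval_mul, eval_C, Dkp_eval_nat]
      rw [Nat.descFactorial_eq_factorial_mul_choose]
      have hk : (k.factorial : ℚ) ≠ 0 := by positivity
      push_cast
      field_simp
    rw [Finset.sum_congr rfl this]
    have := binom_sum A (zunit A) (zunit_sol A).1 (zunit_sol A).2 b m hm
    convert this using 2
  have hGeval : ∀ m : ℕ, G.eval (m : ℚ) = Pf A b m := by
    intro m
    rw [hG, eval_mul, eval_C, eval_mul, eval_X, eval_prod]
    obtain ⟨j, rfl⟩ := Nat.exists_eq_succ_of_ne_zero hb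
    rw [Pf_succ]
    simp only [Nat.succ_sub_one]
    have : ∀ i ∈ range j, (Polynomial.X + Polynomial.C ((A*(j+1:ℕ) - 1 - i : ℤ) : ℚ)).eval (m:ℚ)
        = ((A*(j+1:ℕ) + (m:ℤ) - 1 - i : ℤ) : ℚ) := by
      intro i _
      rw [eval_add, eval_X, eval_C]
      push_cast
      ring
    rw [Finset.prod_congr rfl this]
    rw [prodq]
    have : ∀ i ∈ range j, ((A*(j+1:ℕ) + (m:ℤ) - 1 - i : ℤ) : ℚ) = (((A*(j+1:ℕ) + (m:ℤ) - 1 : ℤ) - i : ℤ) : ℚ) := by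
      intro i _; push_cast; ring
    rw [Finset.prod_congr rfl this]
    push_cast
    ring
  have hFG : F = G := by
    apply Polynomial.eq_of_infinite_eval_eq
    apply Set.infinite_of_injective_forall_mem
      (f := fun j : ℕ => ((j + b : ℕ) : ℚ))
    · intro x y hxy
      simp only [Nat.cast_add] at hxy
      have : (x:ℚ) = y := by linarith
      exact_mod_cast this
    · intro j
      simp only [Set.mem_setOf_eq]
      rw [hFeval (j+b) (Nat.le_add_left b j), hGeval (j+b)]
  -- compare coefficients of X^1
  have hcF : F.coeff 1 = ∑ k ∈ Icc 1 b, ((-1:ℚ)^(k+1)/k) * Pf A (b-k) (A*(k:ℤ)) := by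
    rw [hF, Polynomial.finset_sum_coeff]
    have hterm : ∀ k ∈ range (b+1), (Polynomial.C (Pf A (b-k) (A*(k:ℤ)) / k.factorial) * Dkp k).coeff 1
        = if k = 0 then 0 else ((-1:ℚ)^(k+1)/k) * Pf A (b-k) (A*(k:ℤ)) := by
      intro k _
      rw [Polynomial.coeff_C_mul]
      cases k with
      | zero => simp [Dkp, Polynomial.coeff_one]
      | succ j =>
        have hD : (Dkp (j+1)).coeff 1 = (-1:ℚ)^j * j.factorial := by
          have hsplit : Dkp (j+1) = (∏ i ∈ range j, (Polynomial.X - Polynomial.C ((i+1:ℕ):ℚ))) * Polynomial.X := by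
            rw [Dkp, prod_range_succ']
            simp
          rw [hsplit, Polynomial.coeff_mul_X, Polynomial.coeff_zero_eq_eval_zero, eval_prod]
          have : ∀ i ∈ range j, (Polynomial.X - Polynomial.C ((i+1:ℕ):ℚ)).eval 0 = (-1) * ((i+1:ℕ):ℚ) := by
            intro i _; simp
          rw [Finset.prod_congr rfl this, Finset.prod_mul_distrib, Finset.prod_const]
          have : ∏ i ∈ range j, ((i+1:ℕ):ℚ) = (j.factorial : ℚ) := by
            rw [← Nat.cast_prod]
            congr 1
            exact_mod_cast Finset.prod_range_add_one_eq_factorial j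
          rw [this]
          simp
        rw [hD, if_neg (Nat.succ_ne_zero j)]
        have hfac : ((j+1).factorial : ℚ) = (j+1) * j.factorial := by
          push_cast [Nat.factorial_succ]; ring
        have h1 : (j.factorial : ℚ) ≠ 0 := by positivity
        rw [hfac]
        have hsgn : (-1:ℚ)^(j+1+1) = (-1:ℚ)^j := by
          rw [pow_succ, pow_succ]; ring
        rw [hsgn]
        push_cast
        field_simp
    rw [Finset.sum_congr rfl hterm]
    have hins : range (b+1) = insert 0 (Icc 1 b) := by
      ext i; simp [Finset.mem_range, Finset.mem_insert, Finset.mem_Icc]; omega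
    rw [hins, Finset.sum_insert (by simp)]
    rw [if_pos rfl, zero_add]
    apply Finset.sum_congr rfl
    intro k hk
    rw [Finset.mem_Icc] at hk
    rw [if_neg (by omega)]
  have hcG : G.coeff 1 = prodq (A*b - 1) (b-1) / b.factorial := by
    rw [hG, Polynomial.coeff_C_mul, Polynomial.coeff_X_mul, Polynomial.coeff_zero_eq_eval_zero, eval_prod]
    have : ∀ i ∈ range (b-1), (Polynomial.X + Polynomial.C ((A*b - 1 - i : ℤ) : ℚ)).eval 0
        = (((A*b - 1 : ℤ) - i : ℤ) : ℚ) := by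
      intro i _
      rw [eval_add, eval_X, eval_C]
      push_cast; ring
    rw [Finset.prod_congr rfl this, ← prodq]
    ring
  rw [← hcF, hFG, hcG]


lemma Dne (hA : A ≠ 0) (k : ℕ) : ((A-1)*(k:ℤ)+1) ≠ 0 := by
  intro h
  have h1 : (A-1) * (-(k:ℤ)) = 1 := by linear_combination -h
  have h2 := IsUnit.of_mul_eq_one _ h1
  rw [Int.isUnit_iff] at h2
  rcases h2 with h2 | h2
  · rw [h2] at h; omega
  · omega

lemma sgn_pm (k : ℕ) : sgn A k = 1 ∨ sgn A k = -1 := by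
  rw [sgn]
  rcases Int.even_or_odd ((A+1) * (k:ℤ)) with ⟨t, ht⟩ | ⟨t, ht⟩
  · left
    rw [ht]
    have : t + t = 2 * t := by ring
    rw [this, zpow_mul]
    norm_num
  · right
    rw [ht, zpow_add₀ (by norm_num : (-1:ℚ) ≠ 0), zpow_one, zpow_mul]
    norm_num

end S4




theorem statement4 (A : ℤ) (hA : A ≠ 0) :
    (∃! z : (PowerSeries ℚ)ˣ, IsNahmSol A z) ∧
    ∀ z : (PowerSeries ℚ)ˣ, IsNahmSol A z →
      ((z : PowerSeries ℚ) = PowerSeries.mk (fun k =>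
          (-1 : ℚ) ^ ((A + 1) * (k : ℤ)) * (((A - 1) * (k : ℤ) + 1 : ℤ) : ℚ)⁻¹ *
            genBinom A k)) ∧
      (∀ k : ℕ, ∃ c : ℤ, PowerSeries.coeff k (z : PowerSeries ℚ) = c) ∧
      plogQ (z : PowerSeries ℚ) = PowerSeries.mk (fun k =>
          if k = 0 then 0
          else (-1 : ℚ) ^ ((A + 1) * (k : ℤ)) * ((A * (k : ℤ) : ℤ) : ℚ)⁻¹ *
            genBinom A k) := by
  have hex : IsNahmSol A (S4.zunit A) := ⟨(S4.zunit_sol A).1, (S4.zunit_sol A).2⟩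
  have huniq : ∀ y : (PowerSeries ℚ)ˣ, IsNahmSol A y → y = S4.zunit A := by
    intro y hy
    exact S4.sol_unique A y (S4.zunit A) hy.1 (S4.zunit_sol A).1
      ((S4.sol_iff A y).1 hy.2) ((S4.sol_iff A _).1 (S4.zunit_sol A).2)
  constructor
  · exact ⟨S4.zunit A, hex, huniq⟩
  · intro z hz
    obtain ⟨hz0, hzeq⟩ := hz
    have hpow := S4.coeff_zpow A z hz0 hzeq
    have hcz : ∀ k : ℕ, PowerSeries.coeff k (z : PowerSeries ℚ) = S4.sgn A k * S4.Pf A k 1 := by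
      intro k
      have h1 : (z : PowerSeries ℚ) = ((z ^ (1:ℤ) : (PowerSeries ℚ)ˣ) : PowerSeries ℚ) := by
        rw [zpow_one]
      rw [h1, hpow]
    have hgen : ∀ k : ℕ, genBinom A k = S4.prodq (A*(k:ℤ)) k / k.factorial := by
      intro k
      rw [genBinom, S4.prodq]
    have hPf1 : ∀ k : ℕ, S4.Pf A k 1 = (((A - 1) * (k : ℤ) + 1 : ℤ) : ℚ)⁻¹ * genBinom A k := by
      intro k
      cases k with
      | zero =>
        rw [S4.Pf_zero]
        simp [genBinom]
      | succ j =>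
        rw [S4.Pf_succ, hgen]
        push_cast
        have he : A*((j:ℤ)+1) + 1 - 1 = A*((j:ℤ)+1) := by ring
        rw [he]
        have hsucc := S4.prodq_succ (A*((j:ℤ)+1)) j
        rw [hsucc]
        have hDq : ((A:ℚ)-1)*((j:ℚ)+1)+1 ≠ 0 := by
          exact_mod_cast S4.Dne A hA (j+1)
        have hDval : (((A*((j:ℤ)+1)) : ℤ) : ℚ) - (j:ℚ) = ((A:ℚ)-1)*((j:ℚ)+1)+1 := by
          push_cast; ring
        rw [hDval]
        have hf : ((j+1).factorial : ℚ) ≠ 0 := by positivity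
        field_simp
        skip
    refine ⟨?_, ?_, ?_⟩
    · ext k
      rw [PowerSeries.coeff_mk, hcz k, hPf1 k]
      have : S4.sgn A k = (-1 : ℚ) ^ ((A + 1) * (k : ℤ)) := rfl
      rw [this]
      ring
    · intro k
      cases k with
      | zero =>
        refine ⟨1, ?_⟩
        rw [hcz 0, S4.sgn_zero, S4.Pf_zero]
        norm_num
      | succ j =>
        obtain ⟨c, hc⟩ := S4.prodq_div_factorial_int (j+1) (A*((j:ℤ)+1))
        obtain ⟨d, hd⟩ := S4.prodq_div_factorial_int j (A*((j:ℤ)+1))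
        have hid : S4.Pf A (j+1) 1 = (c : ℚ) - (A-1) * d := by
          rw [S4.Pf_succ]
          push_cast
          rw [← hc, ← hd]
          have he : A*((j:ℤ)+1) + 1 - 1 = A*((j:ℤ)+1) := by ring
          rw [he]
          have hsucc := S4.prodq_succ (A*((j:ℤ)+1)) j
          rw [hsucc]
          push_cast
          have hf : ((j+1).factorial : ℚ) = ((j:ℚ)+1) * (j.factorial : ℚ) := by
            push_cast [Nat.factorial_succ]; ring
          have hf1 : (j.factorial : ℚ) ≠ 0 := by positivity
          rw [hf]
          push_cast
          field_simp
          ring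
        rcases S4.sgn_pm A (j+1) with hs | hs
        · refine ⟨c - (A-1)*d, ?_⟩
          rw [hcz (j+1), hid, hs, one_mul]
          push_cast
          ring
        · refine ⟨-(c - (A-1)*d), ?_⟩
          rw [hcz (j+1), hid, hs]
          push_cast
          ring
    · ext b
      rw [plogQ, PowerSeries.coeff_mk, PowerSeries.coeff_mk]
      cases b with
      | zero => simp
      | succ n =>
        rw [if_neg (Nat.succ_ne_zero n)]
        have hterm : ∀ k ∈ Finset.Icc 1 (n+1),
            ((-1:ℚ)^(k+1)/k) * PowerSeries.coeff (n+1) (((z : PowerSeries ℚ) - 1)^k)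
            = S4.sgn A (n+1) * (((-1:ℚ)^(k+1)/(k:ℚ)) * S4.Pf A (n+1-k) (A*(k:ℤ))) := by
          intro k hk
          rw [Finset.mem_Icc] at hk
          rw [S4.coeff_zsub A z hz0 hzeq k (n+1), if_pos hk.2]
          ring
        rw [Finset.sum_congr rfl hterm, ← Finset.mul_sum,
          S4.star A (n+1) (Nat.succ_ne_zero n)]
        have hs : S4.sgn A (n+1) = (-1 : ℚ) ^ ((A + 1) * ((n+1:ℕ) : ℤ)) := rfl
        rw [hs, hgen (n+1)]
        have hAb : ((A:ℚ))*((n:ℚ)+1) ≠ 0 := by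
          have h2 : ((n:ℚ)+1) ≠ 0 := by positivity
          have h3 : (A:ℚ) ≠ 0 := by exact_mod_cast hA
          exact mul_ne_zero h3 h2
        push_cast
        have hsplit := S4.prodq_succ' (A*((n:ℤ)+1)) n
        rw [hsplit]
        have hf : ((n+1).factorial : ℚ) ≠ 0 := by positivity
        push_cast
        field_simp
end

section
/- Let N ≥ 1 and let A be a symmetric N×N matrix with integer entries. There is a unique N-tuple z(t) = (z_1(t),…,z_N(t)) of power series in ℚ[[t_1,…,t_N]] with z_j(0) = 1 for all j (hence each z_j invertible) satisfying the t-deformed Nahm equations 1 − z_j(t) = (−1)^{A_{jj}} t_j ∏_{i=1}^{N} z_i(t)^{A_{ij}} for j = 1,…,N. Moreover each z_j(t) has integer coefficients: z_j(t) ∈ ℤ[[t_1,…,t_N]]. -/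
/-!
STATEMENT 5: For a symmetric `N×N` integer matrix `A` there is a unique `N`-tuple
`z = (z_1,…,z_N)` of power series in `ℚ[[t_1,…,t_N]]` with `z_j(0) = 1` solving the
`t`-deformed Nahm equations `1 - z_j = (-1)^{A_{jj}} t_j ∏_i z_i^{A_{ij}}`; moreover
each `z_j` has integer coefficients.  (The `z_j` are taken as units, since their
constant terms are `1`, so that the integer powers `z_i^{A_{ij}}` make sense.)
-/

/-- The tuple `z` of units of `ℚ[[t_1,…,t_N]]` has all constant terms `1` and solves the
`t`-deformed Nahm equations for the matrix `A`. -/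
def IsNahmSolMV {N : ℕ} (A : Matrix (Fin N) (Fin N) ℤ)
    (z : Fin N → (MvPowerSeries (Fin N) ℚ)ˣ) : Prop :=
  ∀ j : Fin N,
    MvPowerSeries.constantCoeff (σ := Fin N) (R := ℚ) (z j : MvPowerSeries (Fin N) ℚ) = 1 ∧
    1 - (z j : MvPowerSeries (Fin N) ℚ) =
      MvPowerSeries.C (σ := Fin N) (R := ℚ) ((-1 : ℚ) ^ (A j j)) *
        (MvPowerSeries.X j *
          ((∏ i, z i ^ (A i j) : (MvPowerSeries (Fin N) ℚ)ˣ) : MvPowerSeries (Fin N) ℚ))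

namespace Nahm5

open MvPowerSeries Finset

variable {N : ℕ}

/-- Abbreviation for the ambient power series ring. -/
abbrev PS (N : ℕ) := MvPowerSeries (Fin N) ℚ

/-- Total degree of a monomial exponent. -/
def deg (d : Fin N →₀ ℕ) : ℕ := ∑ i, d i

lemma deg_add (a b : Fin N →₀ ℕ) : deg (a + b) = deg a + deg b := by
  simp [deg, Finsupp.add_apply, Finset.sum_add_distrib]

lemma deg_eq_zero {d : Fin N →₀ ℕ} (h : deg d = 0) : d = 0 := by
  ext i
  have := (Finset.sum_eq_zero_iff.mp h) i (Finset.mem_univ i)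
  simpa using this

lemma deg_zero : deg (0 : Fin N →₀ ℕ) = 0 := by simp [deg]

/-- `DD m P` : all coefficients of `P` in total degree `≤ m` vanish. -/
def DD (m : ℕ) (P : PS N) : Prop :=
  ∀ d : Fin N →₀ ℕ, deg d ≤ m → MvPowerSeries.coeff (R := ℚ) d P = 0

lemma DD.mono {m m' : ℕ} {P : PS N} (h : DD m P) (hle : m' ≤ m) : DD m' P :=
  fun d hd => h d (hd.trans hle)

lemma DD.add {m : ℕ} {P Q : PS N} (hP : DD m P) (hQ : DD m Q) : DD m (P + Q) := by
  intro d hd; rw [map_add, hP d hd, hQ d hd, add_zero]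

lemma DD.neg {m : ℕ} {P : PS N} (hP : DD m P) : DD m (-P) := by
  intro d hd; rw [map_neg, hP d hd, neg_zero]

lemma DD.mul_right {m : ℕ} {P : PS N} (hP : DD m P) (Q : PS N) : DD m (P * Q) := by
  intro d hd
  rw [MvPowerSeries.coeff_mul]
  refine Finset.sum_eq_zero fun p hp => ?_
  have hps := Finset.HasAntidiagonal.mem_antidiagonal.mp hp
  have hdeg : deg p.1 + deg p.2 = deg d := by rw [← deg_add, hps]
  have : deg p.1 ≤ m := le_trans (le_trans (Nat.le.intro hdeg) le_rfl) hd
  rw [hP p.1 this, zero_mul]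

lemma DD.mul_left {m : ℕ} {P : PS N} (hP : DD m P) (Q : PS N) : DD m (Q * P) := by
  rw [mul_comm]; exact hP.mul_right Q

lemma DD.shift {m : ℕ} {P Q : PS N} (hQ : DD 0 Q) (hP : DD m P) : DD (m + 1) (Q * P) := by
  intro d hd
  rw [MvPowerSeries.coeff_mul]
  refine Finset.sum_eq_zero fun p hp => ?_
  have hps := Finset.HasAntidiagonal.mem_antidiagonal.mp hp
  have hdeg : deg p.1 + deg p.2 = deg d := by rw [← deg_add, hps]
  by_cases h1 : deg p.1 = 0
  · rw [hQ p.1 (le_of_eq h1), zero_mul]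
  · have : deg p.2 ≤ m := by omega
    rw [hP p.2 this, mul_zero]

lemma DD_X (j : Fin N) : DD 0 (MvPowerSeries.X j : PS N) := by
  intro d hd
  have hd0 : d = 0 := deg_eq_zero (Nat.le_zero.mp hd)
  subst hd0
  rw [MvPowerSeries.coeff_zero_eq_constantCoeff_apply, MvPowerSeries.constantCoeff_X]

/-- The subgroup of units congruent to `1` up to total degree `m`. -/
noncomputable def H (N m : ℕ) : Subgroup (PS N)ˣ where
  carrier := {u | DD m ((u : PS N) - 1)}
  one_mem' := by intro d _; simp
  mul_mem' := by
    intro u v hu hv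
    have key : ((u * v : (PS N)ˣ) : PS N) - 1
        = (u : PS N) * ((v : PS N) - 1) + ((u : PS N) - 1) := by
      push_cast; ring
    show DD m _
    rw [key]
    exact (DD.mul_left hv _).add hu
  inv_mem' := by
    intro u hu
    have key : ((u⁻¹ : (PS N)ˣ) : PS N) - 1
        = -(((u⁻¹ : (PS N)ˣ) : PS N) * ((u : PS N) - 1)) := by
      have h1 : ((u⁻¹ : (PS N)ˣ) : PS N) * (u : PS N) = 1 := u.inv_mul
      rw [mul_sub, h1]; ring
    show DD m _
    rw [key]
    exact (DD.mul_left hu _).neg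

/-- Congruence of units up to total degree `m`. -/
def Rel (m : ℕ) (u v : (PS N)ˣ) : Prop := DD m ((u : PS N) - (v : PS N))

lemma rel_iff_mem {m : ℕ} {u v : (PS N)ˣ} : Rel m u v ↔ u / v ∈ H N m := by
  constructor
  · intro h
    show DD m _
    have key : ((u / v : (PS N)ˣ) : PS N) - 1
        = ((u : PS N) - (v : PS N)) * ((v⁻¹ : (PS N)ˣ) : PS N) := by
      rw [div_eq_mul_inv, Units.val_mul, sub_mul, Units.mul_inv]
    rw [key]
    exact h.mul_right _
  · intro h
    have key : (u : PS N) - (v : PS N)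
        = (((u / v : (PS N)ˣ) : PS N) - 1) * (v : PS N) := by
      rw [div_eq_mul_inv, Units.val_mul, sub_mul, one_mul, mul_assoc, Units.inv_mul, mul_one]
    show DD m _
    rw [key]
    exact DD.mul_right h _

lemma Rel.mono {m m' : ℕ} {u v : (PS N)ˣ} (h : Rel m u v) (hle : m' ≤ m) : Rel m' u v :=
  DD.mono h hle

lemma Rel.trans {m : ℕ} {u v w : (PS N)ˣ} (h1 : Rel m u v) (h2 : Rel m v w) : Rel m u w := by
  have : (u : PS N) - (w : PS N) = ((u : PS N) - v) + ((v : PS N) - w) := by ring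
  show DD m _
  rw [this]
  exact h1.add h2

lemma Rel.prod_zpow {m : ℕ} {z w : Fin N → (PS N)ˣ} (h : ∀ i, Rel m (z i) (w i))
    (n : Fin N → ℤ) : Rel m (∏ i, z i ^ n i) (∏ i, w i ^ n i) := by
  rw [rel_iff_mem]
  have key : (∏ i, z i ^ n i) / (∏ i, w i ^ n i) = ∏ i, (z i / w i) ^ n i := by
    rw [← Finset.prod_div_distrib]
    exact Finset.prod_congr rfl fun i _ => (div_zpow _ _ _).symm
  rw [key]
  exact Subgroup.prod_mem _ fun i _ => Subgroup.zpow_mem _ (rel_iff_mem.mp (h i)) _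

lemma rel_of_cc {u v : (PS N)ˣ}
    (hu : MvPowerSeries.constantCoeff (σ := Fin N) (R := ℚ) (u : PS N) = 1)
    (hv : MvPowerSeries.constantCoeff (σ := Fin N) (R := ℚ) (v : PS N) = 1) : Rel 0 u v := by
  intro d hd
  have hd0 : d = 0 := deg_eq_zero (Nat.le_zero.mp hd)
  subst hd0
  rw [MvPowerSeries.coeff_zero_eq_constantCoeff_apply, map_sub, hu, hv, sub_self]

section withA
variable (A : Matrix (Fin N) (Fin N) ℤ)

/-- Right-hand side of the fixed-point form of the Nahm equation. -/
noncomputable def rhs (z : Fin N → (PS N)ˣ) (j : Fin N) : PS N :=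
  1 - MvPowerSeries.C (σ := Fin N) (R := ℚ) ((-1 : ℚ) ^ (A j j)) *
    (MvPowerSeries.X j *
      ((∏ i, z i ^ (A i j) : (PS N)ˣ) : PS N))

lemma constantCoeff_rhs (z : Fin N → (PS N)ˣ) (j : Fin N) :
    MvPowerSeries.constantCoeff (σ := Fin N) (R := ℚ) (rhs A z j) = 1 := by
  simp [rhs]

/-- One step of the fixed-point iteration, as a unit. -/
noncomputable def F (z : Fin N → (PS N)ˣ) (j : Fin N) : (PS N)ˣ :=
  (show IsUnit (rhs A z j) from MvPowerSeries.isUnit_iff_constantCoeff.mpr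
    (by rw [constantCoeff_rhs]; exact isUnit_one)).unit

lemma F_val (z : Fin N → (PS N)ˣ) (j : Fin N) : ((F A z j : (PS N)ˣ) : PS N) = rhs A z j :=
  IsUnit.unit_spec _

lemma constantCoeff_F (z : Fin N → (PS N)ˣ) (j : Fin N) :
    MvPowerSeries.constantCoeff (σ := Fin N) (R := ℚ) ((F A z j : (PS N)ˣ) : PS N) = 1 := by
  rw [F_val]; exact constantCoeff_rhs A z j

lemma F_contract {m : ℕ} {z w : Fin N → (PS N)ˣ} (h : ∀ i, Rel m (z i) (w i)) (j : Fin N) :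
    Rel (m + 1) (F A z j) (F A w j) := by
  have hp : Rel m (∏ i, z i ^ (A i j)) (∏ i, w i ^ (A i j)) :=
    Rel.prod_zpow h fun i => A i j
  have hp' : DD m (((∏ i, w i ^ (A i j) : (PS N)ˣ) : PS N)
      - ((∏ i, z i ^ (A i j) : (PS N)ˣ) : PS N)) := by
    have := (hp : DD m _).neg
    simpa using this
  show DD (m + 1) _
  have key : ((F A z j : (PS N)ˣ) : PS N) - ((F A w j : (PS N)ˣ) : PS N)
      = MvPowerSeries.C (σ := Fin N) (R := ℚ) ((-1 : ℚ) ^ (A j j)) *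
        (MvPowerSeries.X j *
          (((∏ i, w i ^ (A i j) : (PS N)ˣ) : PS N)
            - ((∏ i, z i ^ (A i j) : (PS N)ˣ) : PS N))) := by
    rw [F_val, F_val, rhs, rhs]; ring
  rw [key]
  exact DD.mul_left (DD.shift (DD_X j) hp') _

/-- The fixed-point iteration sequence starting from the constant tuple `1`. -/
noncomputable def zseq : ℕ → (Fin N → (PS N)ˣ)
  | 0 => fun _ => 1
  | (m + 1) => F A (zseq m)

lemma constantCoeff_zseq (m : ℕ) (j : Fin N) :
    MvPowerSeries.constantCoeff (σ := Fin N) (R := ℚ) ((zseq A m j : (PS N)ˣ) : PS N) = 1 := by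
  cases m with
  | zero => simp [zseq]
  | succ m => exact constantCoeff_F A _ j

lemma zseq_succ_rel : ∀ m : ℕ, ∀ j : Fin N, Rel m (zseq A (m + 1) j) (zseq A m j) := by
  intro m
  induction m with
  | zero =>
      intro j
      exact rel_of_cc (constantCoeff_zseq A 1 j) (constantCoeff_zseq A 0 j)
  | succ m ih =>
      intro j
      exact F_contract A ih j

lemma zseq_stable (m : ℕ) : ∀ k : ℕ, ∀ j : Fin N, Rel m (zseq A (m + k) j) (zseq A m j) := by
  intro k
  induction k with
  | zero => intro j; intro d _; simp only [Nat.add_zero, sub_self, map_zero]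
  | succ k ih =>
      intro j
      have h1 : Rel m (zseq A (m + k + 1) j) (zseq A (m + k) j) :=
        (zseq_succ_rel A (m + k) j).mono (Nat.le_add_right m k)
      exact (show Rel m (zseq A (m + (k+1)) j) (zseq A (m+k) j) by
        rw [← Nat.add_assoc]; exact h1).trans (ih j)

/-- The limit power series. -/
noncomputable def Lser (j : Fin N) : PS N :=
  fun d => MvPowerSeries.coeff (R := ℚ) d ((zseq A (deg d) j : (PS N)ˣ) : PS N)

lemma coeff_Lser (j : Fin N) (d : Fin N →₀ ℕ) :
    MvPowerSeries.coeff (R := ℚ) d (Lser A j) =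
      MvPowerSeries.coeff (R := ℚ) d ((zseq A (deg d) j : (PS N)ˣ) : PS N) := rfl

lemma constantCoeff_Lser (j : Fin N) :
    MvPowerSeries.constantCoeff (σ := Fin N) (R := ℚ) (Lser A j) = 1 := by
  rw [← MvPowerSeries.coeff_zero_eq_constantCoeff_apply, coeff_Lser, deg_zero,
    MvPowerSeries.coeff_zero_eq_constantCoeff_apply, constantCoeff_zseq]

/-- The limit as a unit. -/
noncomputable def L (j : Fin N) : (PS N)ˣ :=
  (show IsUnit (Lser A j) from MvPowerSeries.isUnit_iff_constantCoeff.mpr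
    (by rw [constantCoeff_Lser]; exact isUnit_one)).unit

lemma L_val (j : Fin N) : ((L A j : (PS N)ˣ) : PS N) = Lser A j := IsUnit.unit_spec _

lemma L_rel (m : ℕ) (j : Fin N) : Rel m (L A j) (zseq A m j) := by
  intro d hd
  rw [map_sub, L_val, coeff_Lser]
  have h := zseq_stable A (deg d) (m - deg d) j d le_rfl
  rw [Nat.add_sub_cancel' hd] at h
  rw [map_sub] at h
  rw [sub_eq_zero] at h ⊢
  exact h.symm

lemma L_fixed (j : Fin N) : F A (L A) j = L A j := by
  apply Units.ext
  apply MvPowerSeries.ext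
  intro d
  set m := deg d with hm
  have h1 : Rel m (F A (L A) j) (zseq A (m + 1) j) :=
    (F_contract A (fun i => L_rel A m i) j).mono (Nat.le_succ m)
  have h2 : Rel m (L A j) (zseq A (m + 1) j) := by
    have := (L_rel A (m + 1) j).mono (Nat.le_succ m)
    exact this
  have e1 := h1 d le_rfl
  have e2 := h2 d le_rfl
  rw [map_sub, sub_eq_zero] at e1 e2
  rw [e1, e2]

lemma L_sol : IsNahmSolMV A (L A) := by
  intro j
  constructor
  · rw [L_val]; exact constantCoeff_Lser A j
  · have h : ((L A j : (PS N)ˣ) : PS N) = rhs A (L A) j := by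
      rw [← L_fixed A j, F_val]
    rw [h, rhs]
    ring

lemma sol_fixed {z : Fin N → (PS N)ˣ} (hz : IsNahmSolMV A z) (j : Fin N) :
    F A z j = z j := by
  apply Units.ext
  rw [F_val, rhs]
  have := (hz j).2
  rw [← this]
  ring

lemma sol_unique {z w : Fin N → (PS N)ˣ} (hz : IsNahmSolMV A z) (hw : IsNahmSolMV A w) :
    z = w := by
  have hrel : ∀ m : ℕ, ∀ j : Fin N, Rel m (z j) (w j) := by
    intro m
    induction m with
    | zero => intro j; exact rel_of_cc (hz j).1 (hw j).1
    | succ m ih =>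
        intro j
        rw [← sol_fixed A hz j, ← sol_fixed A hw j]
        exact F_contract A ih j
  funext j
  apply Units.ext
  apply MvPowerSeries.ext
  intro d
  have := hrel (deg d) j d le_rfl
  rw [map_sub, sub_eq_zero] at this
  exact this

end withA

/-! ### Integrality -/

/-- `ID m P` : all coefficients of `P` in total degree `≤ m` are integers. -/
def ID (m : ℕ) (P : PS N) : Prop :=
  ∀ d : Fin N →₀ ℕ, deg d ≤ m → MvPowerSeries.coeff (R := ℚ) d P ∈ (⊥ : Subring ℚ)

lemma ID.one (m : ℕ) : ID m (1 : PS N) := by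
  intro d _
  classical
  rw [MvPowerSeries.coeff_one]
  split
  · exact Subring.one_mem _
  · exact Subring.zero_mem _

lemma ID.mul {m : ℕ} {P Q : PS N} (hP : ID m P) (hQ : ID m Q) : ID m (P * Q) := by
  intro d hd
  classical
  rw [MvPowerSeries.coeff_mul]
  refine Subring.sum_mem _ fun p hp => ?_
  have hps := Finset.HasAntidiagonal.mem_antidiagonal.mp hp
  have hdeg : deg p.1 + deg p.2 = deg d := by rw [← deg_add, hps]
  exact Subring.mul_mem _ (hP p.1 (by omega)) (hQ p.2 (by omega))

lemma ID.shift {m : ℕ} {P Q : PS N}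
    (hQ0 : MvPowerSeries.coeff (R := ℚ) (0 : Fin N →₀ ℕ) Q = 0)
    (hQ : ∀ d, MvPowerSeries.coeff (R := ℚ) d Q ∈ (⊥ : Subring ℚ))
    (hP : ID m P) : ID (m + 1) (Q * P) := by
  intro d hd
  classical
  rw [MvPowerSeries.coeff_mul]
  refine Subring.sum_mem _ fun p hp => ?_
  have hps := Finset.HasAntidiagonal.mem_antidiagonal.mp hp
  have hdeg : deg p.1 + deg p.2 = deg d := by rw [← deg_add, hps]
  by_cases h1 : deg p.1 = 0
  · have : p.1 = 0 := deg_eq_zero h1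
    rw [this, hQ0, zero_mul]
    exact Subring.zero_mem _
  · exact Subring.mul_mem _ (hQ p.1) (hP p.2 (by omega))

lemma coeff_X_mem (j : Fin N) (d : Fin N →₀ ℕ) :
    MvPowerSeries.coeff (R := ℚ) d (MvPowerSeries.X j : PS N) ∈ (⊥ : Subring ℚ) := by
  classical
  rw [MvPowerSeries.coeff_X]
  split
  · exact Subring.one_mem _
  · exact Subring.zero_mem _

lemma ID.inv {m : ℕ} (u : (PS N)ˣ)
    (hu : MvPowerSeries.constantCoeff (σ := Fin N) (R := ℚ) (u : PS N) = 1)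
    (h : ID m ((u : (PS N)ˣ) : PS N)) : ID m ((u⁻¹ : (PS N)ˣ) : PS N) := by
  classical
  suffices key : ∀ k : ℕ, ∀ d : Fin N →₀ ℕ, deg d ≤ k → deg d ≤ m →
      MvPowerSeries.coeff (R := ℚ) d ((u⁻¹ : (PS N)ˣ) : PS N) ∈ (⊥ : Subring ℚ) by
    intro d hd
    exact key (deg d) d le_rfl hd
  intro k
  induction k using Nat.strong_induction_on with
  | _ k ih =>
    intro d hdk hdm
    have heq : ((u⁻¹ : (PS N)ˣ) : PS N) * (u : PS N) = 1 := u.inv_mul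
    have hc := congrArg (MvPowerSeries.coeff (R := ℚ) d) heq
    rw [MvPowerSeries.coeff_mul] at hc
    have hmem : ((d, (0 : Fin N →₀ ℕ))) ∈ Finset.HasAntidiagonal.antidiagonal d := by
      rw [Finset.HasAntidiagonal.mem_antidiagonal]; simp
    rw [← Finset.add_sum_erase _ _ hmem] at hc
    have hc0 : MvPowerSeries.coeff (R := ℚ) (0 : Fin N →₀ ℕ) (u : PS N) = 1 := by
      rw [MvPowerSeries.coeff_zero_eq_constantCoeff_apply, hu]
    rw [hc0, mul_one] at hc
    have hval : MvPowerSeries.coeff (R := ℚ) d ((u⁻¹ : (PS N)ˣ) : PS N)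
        = MvPowerSeries.coeff (R := ℚ) d (1 : PS N)
          - ∑ p ∈ (Finset.HasAntidiagonal.antidiagonal d).erase (d, 0),
              MvPowerSeries.coeff (R := ℚ) p.1 ((u⁻¹ : (PS N)ˣ) : PS N) *
                MvPowerSeries.coeff (R := ℚ) p.2 (u : PS N) := by
      rw [← hc]; ring
    rw [hval]
    refine Subring.sub_mem _ ?_ (Subring.sum_mem _ fun p hp => ?_)
    · rw [MvPowerSeries.coeff_one]; split
      · exact Subring.one_mem _
      · exact Subring.zero_mem _
    · have hpa := Finset.mem_of_mem_erase hp
      have hpne := Finset.ne_of_mem_erase hp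
      have hps := Finset.HasAntidiagonal.mem_antidiagonal.mp hpa
      have hp2 : p.2 ≠ 0 := by
        intro h0
        apply hpne
        have : p.1 = d := by rw [← hps, h0, add_zero]
        exact Prod.ext this h0
      have hdeg : deg p.1 + deg p.2 = deg d := by rw [← deg_add, hps]
      have hp2pos : 0 < deg p.2 := by
        rcases Nat.eq_zero_or_pos (deg p.2) with h0 | h0
        · exact absurd (deg_eq_zero h0) hp2
        · exact h0
      refine Subring.mul_mem _ (ih (deg p.1) (by omega) p.1 le_rfl (by omega)) (h p.2 (by omega))

lemma ID.pow {m : ℕ} {P : PS N} (h : ID m P) (k : ℕ) : ID m (P ^ k) := by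
  induction k with
  | zero => simpa using ID.one m
  | succ k ih => rw [pow_succ]; exact ih.mul h

lemma ID.zpow {m : ℕ} (u : (PS N)ˣ)
    (hu : MvPowerSeries.constantCoeff (σ := Fin N) (R := ℚ) (u : PS N) = 1)
    (h : ID m ((u : (PS N)ˣ) : PS N)) (n : ℤ) : ID m ((u ^ n : (PS N)ˣ) : PS N) := by
  cases n with
  | ofNat k =>
      have : ((u ^ (Int.ofNat k) : (PS N)ˣ) : PS N) = ((u : PS N)) ^ k := by
        rw [Int.ofNat_eq_coe, zpow_natCast]
        exact Units.val_pow_eq_pow_val u k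
      rw [this]
      exact h.pow k
  | negSucc k =>
      have : ((u ^ (Int.negSucc k) : (PS N)ˣ) : PS N) = (((u⁻¹ : (PS N)ˣ) : PS N)) ^ (k + 1) := by
        rw [zpow_negSucc, ← inv_pow]
        exact Units.val_pow_eq_pow_val u⁻¹ (k + 1)
      rw [this]
      exact (ID.inv u hu h).pow (k + 1)

lemma sol_ID {A : Matrix (Fin N) (Fin N) ℤ} {z : Fin N → (PS N)ˣ} (hz : IsNahmSolMV A z) :
    ∀ m : ℕ, ∀ j : Fin N, ID m ((z j : (PS N)ˣ) : PS N) := by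
  intro m
  induction m with
  | zero =>
      intro j d hd
      have hd0 : d = 0 := deg_eq_zero (Nat.le_zero.mp hd)
      subst hd0
      rw [MvPowerSeries.coeff_zero_eq_constantCoeff_apply, (hz j).1]
      exact Subring.one_mem _
  | succ m ih =>
      intro j
      have hprod : ID m ((∏ i, z i ^ (A i j) : (PS N)ˣ) : PS N) := by
        have hval : ((∏ i, z i ^ (A i j) : (PS N)ˣ) : PS N)
            = ∏ i, ((z i ^ (A i j) : (PS N)ˣ) : PS N) := by
          exact map_prod (Units.coeHom (PS N)) (fun i => z i ^ (A i j)) Finset.univ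
        rw [hval]
        refine Finset.prod_induction _ (ID m) (fun a b ha hb => ha.mul hb) (ID.one m)
          fun i _ => ID.zpow (z i) (hz i).1 (ih i) (A i j)
      have hXP : ID (m + 1) (MvPowerSeries.X j * ((∏ i, z i ^ (A i j) : (PS N)ˣ) : PS N)) := by
        refine ID.shift ?_ (coeff_X_mem j) hprod
        rw [MvPowerSeries.coeff_zero_eq_constantCoeff_apply, MvPowerSeries.constantCoeff_X]
      have hsign : ((-1 : ℚ) ^ (A j j)) ∈ (⊥ : Subring ℚ) := by
        rcases Int.even_or_odd (A j j) with he | ho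
        · rw [he.neg_one_zpow]; exact Subring.one_mem _
        · rw [ho.neg_one_zpow]; exact Subring.neg_mem _ (Subring.one_mem _)
      have key : ((z j : (PS N)ˣ) : PS N)
          = 1 - MvPowerSeries.C (σ := Fin N) (R := ℚ) ((-1 : ℚ) ^ (A j j)) *
              (MvPowerSeries.X j * ((∏ i, z i ^ (A i j) : (PS N)ˣ) : PS N)) := by
        rw [← (hz j).2]; ring
      intro d hd
      rw [key, map_sub, MvPowerSeries.coeff_C_mul]
      refine Subring.sub_mem _ ?_ (Subring.mul_mem _ hsign (hXP d hd))
      classical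
      rw [MvPowerSeries.coeff_one]
      split
      · exact Subring.one_mem _
      · exact Subring.zero_mem _

end Nahm5

theorem statement5 (N : ℕ) (A : Matrix (Fin N) (Fin N) ℤ) (hA : A.IsSymm) :
    (∃! z : Fin N → (MvPowerSeries (Fin N) ℚ)ˣ, IsNahmSolMV A z) ∧
    ∀ z : Fin N → (MvPowerSeries (Fin N) ℚ)ˣ, IsNahmSolMV A z →
      ∀ (j : Fin N) (d : Fin N →₀ ℕ),
        ∃ c : ℤ, MvPowerSeries.coeff (R := ℚ) d (z j : MvPowerSeries (Fin N) ℚ) = c := by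
  constructor
  · exact ⟨Nahm5.L A, Nahm5.L_sol A, fun w hw => Nahm5.sol_unique A hw (Nahm5.L_sol A)⟩
  · intro z hz j d
    have := Nahm5.sol_ID hz (Nahm5.deg d) j d le_rfl
    rcases Subring.mem_bot.mp this with ⟨c, hc⟩
    exact ⟨c, hc.symm⟩
end

section
/- Let A be a symmetric N×N integer matrix, I the N×N identity matrix, and let τ: ℚ(q) → ℚ(q) be the ℚ-algebra automorphism with τ(q) = q^{−1}, applied coefficientwise to ℚ(q)[[t_1,…,t_N]]. Then F_A(t,q) = τ(F_{I−A}(t,q)); that is, F_A(t,q) = F_{I−A}(t,q^{−1}). -/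
/-!
STATEMENT 7: For a symmetric integer matrix `A` and the ℚ-algebra automorphism `τ` of
`ℚ(q)` with `τ(q) = q⁻¹` (applied coefficientwise), one has
`F_A(t,q) = τ(F_{I-A}(t,q))`, i.e. `F_A(t,q) = F_{I-A}(t,q⁻¹)`.
-/

/-- `(q;q)_k = ∏_{j=1}^k (1 - q^j)` in `ℚ(q)`. -/
noncomputable def qPochR (k : ℕ) : RatFunc ℚ :=
  ∏ j ∈ Finset.Icc 1 k, (1 - RatFunc.X ^ j)

/-- The coefficient of `t^n` (for `n = d`) in the Nahm sum `F_A`. -/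
noncomputable def nahmCoeff {N : ℕ} (A : Matrix (Fin N) (Fin N) ℤ) (d : Fin N →₀ ℕ) :
    RatFunc ℚ :=
  ((-1 : RatFunc ℚ) ^ (∑ i, A i i * (d i : ℤ)) *
      RatFunc.X ^
        (((∑ i, ∑ j, A i j * (d i : ℤ) * (d j : ℤ)) + ∑ i, A i i * (d i : ℤ)) / 2)) /
    ∏ i, qPochR (d i)

/-- The Nahm sum `F_A(t,q) ∈ ℚ(q)[[t_1,…,t_N]]`. -/
noncomputable def nahmF {N : ℕ} (A : Matrix (Fin N) (Fin N) ℤ) :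
    MvPowerSeries (Fin N) (RatFunc ℚ) :=
  fun d => nahmCoeff A d

open Finset

lemma my_zpow_sum {ι : Type*} {G₀ : Type*} [CommGroupWithZero G₀] (a : G₀) (ha : a ≠ 0)
    (s : Finset ι) (f : ι → ℤ) : a ^ (∑ i ∈ s, f i) = ∏ i ∈ s, a ^ f i := by
  induction s using Finset.cons_induction with
  | empty => simp
  | cons i s hi ih => rw [sum_cons, prod_cons, zpow_add₀ ha, ih]

lemma my_gauss (n : ℕ) : 2 * (∑ i ∈ Icc 1 n, (i : ℤ)) = n * n + n := by
  induction n with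
  | zero => simp
  | succ k ih =>
    rw [Finset.sum_Icc_succ_top (by omega)]
    push_cast
    push_cast at ih
    ring_nf
    ring_nf at ih
    omega

lemma my_tau_qPochR (τ : RatFunc ℚ →ₐ[ℚ] RatFunc ℚ) (hτ : τ RatFunc.X = (RatFunc.X)⁻¹)
    (k : ℕ) :
    τ (qPochR k) = (-1) ^ k * RatFunc.X ^ (-(∑ j ∈ Icc 1 k, (j : ℤ))) * qPochR k := by
  have hX : (RatFunc.X : RatFunc ℚ) ≠ 0 := RatFunc.X_ne_zero
  have hfac : ∀ j ∈ Icc 1 k, τ (1 - RatFunc.X ^ j)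
      = (-(RatFunc.X ^ (-(j : ℤ)))) * (1 - RatFunc.X ^ j) := by
    intro j _
    rw [map_sub, map_one, map_pow, hτ, inv_pow, zpow_neg, zpow_natCast]
    have hXj : (RatFunc.X : RatFunc ℚ) ^ j ≠ 0 := pow_ne_zero _ hX
    field_simp
    ring
  rw [qPochR, map_prod, Finset.prod_congr rfl hfac, Finset.prod_mul_distrib, ← qPochR]
  congr 1
  have h1 : ∀ j ∈ Icc 1 k, -((RatFunc.X : RatFunc ℚ) ^ (-(j : ℤ))) = (-1) * (RatFunc.X : RatFunc ℚ) ^ (-(j : ℤ)) :=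
    fun j _ => (neg_one_mul _).symm
  have h2 : ∏ j ∈ Icc 1 k, (RatFunc.X : RatFunc ℚ) ^ (-(j : ℤ)) = (RatFunc.X : RatFunc ℚ) ^ (∑ j ∈ Icc 1 k, -(j : ℤ)) :=
    (my_zpow_sum _ hX _ _).symm
  rw [Finset.prod_congr rfl h1, Finset.prod_mul_distrib, Finset.prod_const, Nat.card_Icc, h2,
    Finset.sum_neg_distrib]
  simp

lemma my_parity {N : ℕ} (A : Matrix (Fin N) (Fin N) ℤ) (hA : A.IsSymm) (d : Fin N →₀ ℕ) :
    2 ∣ (∑ i, ∑ j, A i j * (d i : ℤ) * (d j : ℤ)) + ∑ i, A i i * (d i : ℤ) := by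
  suffices h0 : ((((∑ i, ∑ j, A i j * (d i : ℤ) * (d j : ℤ)) + ∑ i, A i i * (d i : ℤ)) : ℤ) :
      ZMod 2) = 0 by
    exact_mod_cast (ZMod.intCast_zmod_eq_zero_iff_dvd _ 2).mp h0
  push_cast
  have hsq : ∀ x : ZMod 2, x * x = x := by decide
  have hdouble : ∀ x : ZMod 2, x + x = 0 := by decide
  set f : Fin N × Fin N → ZMod 2 :=
    fun p => (A p.1 p.2 : ZMod 2) * (d p.1 : ZMod 2) * (d p.2 : ZMod 2) with hf
  have h1 : (∑ i, ∑ j, (A i j : ZMod 2) * (d i : ZMod 2) * (d j : ZMod 2))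
      = ∑ p ∈ Finset.univ ×ˢ Finset.univ, f p := by
    rw [Finset.sum_product]
  have hsplit : ∑ p ∈ Finset.univ ×ˢ Finset.univ, f p
      = ∑ p ∈ (Finset.univ : Finset (Fin N)).diag, f p
        + ∑ p ∈ (Finset.univ : Finset (Fin N)).offDiag, f p := by
    rw [← Finset.diag_union_offDiag, Finset.sum_union (Finset.disjoint_diag_offDiag _)]
  have hoff : ∑ p ∈ (Finset.univ : Finset (Fin N)).offDiag, f p = 0 := by
    apply Finset.sum_involution (fun p _ => p.swap)
    · intro p hp
      have hsymm : (A p.2 p.1 : ZMod 2) = (A p.1 p.2 : ZMod 2) := by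
        rw [hA.apply]
      simp only [hf, Prod.fst_swap, Prod.snd_swap, hsymm]
      rw [show (A p.1 p.2 : ZMod 2) * (d p.2 : ZMod 2) * (d p.1 : ZMod 2)
          = (A p.1 p.2 : ZMod 2) * (d p.1 : ZMod 2) * (d p.2 : ZMod 2) by ring]
      exact hdouble _
    · intro p hp _
      have hne := (Finset.mem_offDiag.mp hp).2.2
      intro hc
      exact hne (congrArg Prod.fst hc).symm
    · intro p hp
      exact Prod.swap_swap p
    · intro p hp
      rw [Finset.mem_offDiag] at hp ⊢
      exact ⟨hp.2.1, hp.1, fun h => hp.2.2 h.symm⟩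
  have hdiag : ∑ p ∈ (Finset.univ : Finset (Fin N)).diag, f p
      = ∑ i, (A i i : ZMod 2) * (d i : ZMod 2) := by
    rw [Finset.sum_diag]
    refine Finset.sum_congr rfl fun i _ => ?_
    simp only [hf]
    rw [mul_assoc, hsq]
  rw [h1, hsplit, hoff, hdiag, add_zero, ← Finset.sum_add_distrib]
  refine Finset.sum_eq_zero fun i _ => hdouble _

lemma my_final (P : RatFunc ℚ) (a b S1 L : ℤ) (s : ℕ) (hs : (s : ℤ) = S1) :
    ((-1 : RatFunc ℚ) ^ (S1 - L) * RatFunc.X ^ (a - b)) /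
      ((-1) ^ s * RatFunc.X ^ (-b) * P)
    = ((-1 : RatFunc ℚ) ^ L * RatFunc.X ^ a) / P := by
  have hX : (RatFunc.X : RatFunc ℚ) ≠ 0 := RatFunc.X_ne_zero
  have hm1 : (-1 : RatFunc ℚ) ≠ 0 := by norm_num
  have hL1 : ((-1 : RatFunc ℚ) ^ L)⁻¹ = (-1 : RatFunc ℚ) ^ L := by
    rw [← inv_zpow, inv_neg, inv_one]
  set c : RatFunc ℚ := (-1 : RatFunc ℚ) ^ S1 * (RatFunc.X ^ b)⁻¹ with hc
  have hcne : c ≠ 0 := mul_ne_zero (zpow_ne_zero _ hm1) (inv_ne_zero (zpow_ne_zero _ hX))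
  have hnum : (-1 : RatFunc ℚ) ^ (S1 - L) * RatFunc.X ^ (a - b)
      = c * ((-1 : RatFunc ℚ) ^ L * RatFunc.X ^ a) := by
    rw [zpow_sub₀ hm1, zpow_sub₀ hX, hc]
    rw [div_eq_mul_inv, div_eq_mul_inv, hL1]
    ring
  have hden : ((-1 : RatFunc ℚ)) ^ s * RatFunc.X ^ (-b) * P = c * P := by
    rw [hc, zpow_neg, ← hs, zpow_natCast]
  rw [hnum, hden, mul_div_mul_left _ _ hcne]

theorem statement7 (N : ℕ) (A : Matrix (Fin N) (Fin N) ℤ) (hA : A.IsSymm)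
    (τ : RatFunc ℚ →ₐ[ℚ] RatFunc ℚ) (hτ : τ RatFunc.X = (RatFunc.X)⁻¹) :
    nahmF A = MvPowerSeries.map τ.toRingHom (nahmF (1 - A)) := by
  have hX : (RatFunc.X : RatFunc ℚ) ≠ 0 := RatFunc.X_ne_zero
  have hm1 : (-1 : RatFunc ℚ) ≠ 0 := by norm_num
  ext d
  rw [MvPowerSeries.coeff_map]
  show nahmCoeff A d = τ (nahmCoeff (1 - A) d)
  -- abbreviations
  set Q : ℤ := ∑ i, ∑ j, A i j * (d i : ℤ) * (d j : ℤ) with hQ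
  set L : ℤ := ∑ i, A i i * (d i : ℤ) with hL
  set S1 : ℤ := ∑ i, (d i : ℤ) with hS1
  set S2 : ℤ := ∑ i, (d i : ℤ) * (d i : ℤ) with hS2
  set T : ℕ → ℤ := fun k => ∑ j ∈ Icc 1 k, (j : ℤ) with hT
  set b : ℤ := ∑ i, T (d i) with hb
  -- the B = 1 - A sums
  have hBdiag : (∑ i, (1 - A) i i * (d i : ℤ)) = S1 - L := by
    simp only [Matrix.sub_apply, Matrix.one_apply_eq, sub_mul, one_mul]
    rw [Finset.sum_sub_distrib]
  have hBquad : (∑ i, ∑ j, (1 - A) i j * (d i : ℤ) * (d j : ℤ)) = S2 - Q := by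
    have : ∀ i : Fin N, (∑ j, (1 - A) i j * (d i : ℤ) * (d j : ℤ))
        = (d i : ℤ) * (d i : ℤ) - ∑ j, A i j * (d i : ℤ) * (d j : ℤ) := by
      intro i
      have : ∀ j : Fin N, (1 - A) i j * (d i : ℤ) * (d j : ℤ)
          = (if i = j then (d i : ℤ) * (d j : ℤ) else 0)
            - A i j * (d i : ℤ) * (d j : ℤ) := by
        intro j
        simp only [Matrix.sub_apply, Matrix.one_apply]
        split <;> ring
      rw [Finset.sum_congr rfl fun j _ => this j, Finset.sum_sub_distrib,
        Finset.sum_ite_eq Finset.univ i fun j => (d i : ℤ) * (d j : ℤ)]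
      simp
    rw [Finset.sum_congr rfl fun i _ => this i, Finset.sum_sub_distrib]
  -- parity facts
  obtain ⟨a, ha⟩ := my_parity A hA d
  have h2b : 2 * b = S2 + S1 := by
    rw [hb, hS2, hS1, ← Finset.sum_add_distrib, Finset.mul_sum]
    exact Finset.sum_congr rfl fun i _ => my_gauss (d i)
  -- compute both exponents
  have hexpA : (Q + L) / 2 = a := by omega
  have hexpB : -((S2 - Q + (S1 - L)) / 2) = a - b := by omega
  -- unfold and apply τ
  rw [nahmCoeff, nahmCoeff, ← hQ, ← hL, hBdiag, hBquad]
  rw [map_div₀, map_mul, map_zpow₀, map_zpow₀, map_neg, map_one, hτ, map_prod]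
  rw [Finset.prod_congr rfl fun i _ => my_tau_qPochR τ hτ (d i)]
  rw [Finset.prod_mul_distrib, Finset.prod_mul_distrib]
  rw [Finset.prod_pow_eq_pow_sum, inv_zpow, ← zpow_neg, hexpB, hexpA]
  have hprodX : (∏ i, (RatFunc.X : RatFunc ℚ) ^ (-(T (d i))))
      = RatFunc.X ^ (-b) := by
    rw [← my_zpow_sum _ hX, hb, Finset.sum_neg_distrib]
  rw [hprodX]
  have hscast : ((∑ i, d i : ℕ) : ℤ) = S1 := by
    rw [hS1]; push_cast; rfl
  exact (my_final (∏ i, qPochR (d i)) a b S1 L (∑ i, d i) hscast).symm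
end

section
/- Let A be an integer and F_A(t,q) := ∑_{k≥0} (−1)^{Ak} q^{Ak(k+1)/2} t^k/(q;q)_k ∈ ℚ(q)[[t]] the one-variable Nahm sum. Then the ratio G(t,q) := F_A(qt,q)/F_A(t,q) has all coefficients in ℤ[q,q^{−1}], i.e. G(t,q) ∈ ℤ[q^{±1}][[t]], and it satisfies the Riccati equation 1 − G(t,q) = (−1)^A q^A t ∏_{j=0}^{A−1} G(q^j t, q), where for A ≤ 0 the product ∏_{j=0}^{A−1} denotes ∏_{j=A}^{−1} G(q^j t, q)^{−1} (an empty product if A = 0, using that G is invertible since G(0,q)=1). -/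
/-- The one-variable Nahm sum
`F_A(t,q) = ∑_{k ≥ 0} (-1)^{Ak} q^{Ak(k+1)/2} t^k/(q;q)_k ∈ ℚ(q)[[t]]`
(the exponent `Ak(k+1)/2` is an integer, so integer division is exact). -/
noncomputable def nahmF1 (A : ℤ) : PowerSeries (RatFunc ℚ) :=
  PowerSeries.mk fun k =>
    (-1 : RatFunc ℚ) ^ (A * (k : ℤ)) *
      RatFunc.X ^ ((A * (k : ℤ) * ((k : ℤ) + 1)) / 2) / qPochR k

/-- The substitution `t ↦ q^c t` on `ℚ(q)[[t]]`. -/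
noncomputable def rsq (c : ℤ) (f : PowerSeries (RatFunc ℚ)) : PowerSeries (RatFunc ℚ) :=
  PowerSeries.rescale (RatFunc.X ^ c) f

/-- `G(t,q) = F_A(qt,q)/F_A(t,q)`. -/
noncomputable def ratioG (A : ℤ) : PowerSeries (RatFunc ℚ) :=
  rsq 1 (nahmF1 A) * (nahmF1 A)⁻¹

/-- `∏_{j=0}^{A-1} G(q^j t, q)`, where for `A ≤ 0` this denotes
`∏_{j=A}^{-1} G(q^j t, q)⁻¹` (an empty product for `A = 0`). -/
noncomputable def riccatiProd (A : ℤ) (G : PowerSeries (RatFunc ℚ)) :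
    PowerSeries (RatFunc ℚ) :=
  if 0 ≤ A then ∏ j ∈ Finset.range A.toNat, rsq (j : ℤ) G
  else ∏ j ∈ Finset.range (-A).toNat, (rsq (A + (j : ℤ)) G)⁻¹

/-- `r ∈ ℚ(q)` is a Laurent polynomial with integer coefficients, i.e. lies in
`ℤ[q,q⁻¹]`: `r = P(q)/q^s` for some `P ∈ ℤ[q]` and `s : ℕ`. -/
def IsIntLaurent (r : RatFunc ℚ) : Prop :=
  ∃ (P : Polynomial ℤ) (s : ℕ),
    r * RatFunc.X ^ s = algebraMap (Polynomial ℚ) (RatFunc ℚ) (P.map (Int.castRingHom ℚ))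

/-! ### Auxiliary machinery -/

local notation "K" => RatFunc ℚ

open PowerSeries

lemma Xne : (RatFunc.X : K) ≠ 0 := RatFunc.X_ne_zero

lemma Xzpow_pow (c : ℤ) (k : ℕ) : (RatFunc.X ^ c : K) ^ k = RatFunc.X ^ (c * k) := by
  induction k with
  | zero => simp
  | succ n ih =>
      rw [pow_succ, ih, ← zpow_add₀ Xne]
      congr 1; push_cast; ring

lemma one_sub_X_pow_ne {j : ℕ} (hj : 1 ≤ j) : (1 - RatFunc.X ^ j : K) ≠ 0 := by
  intro h
  have h2 : (RatFunc.X : K) ^ j = 1 := by linear_combination -h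
  have h3 : (algebraMap (Polynomial ℚ) (RatFunc ℚ)) (Polynomial.X ^ j) =
      (algebraMap (Polynomial ℚ) (RatFunc ℚ)) 1 := by
    rw [map_one, map_pow, RatFunc.algebraMap_X, h2]
  have h4 := RatFunc.algebraMap_injective ℚ h3
  have := congrArg Polynomial.natDegree h4
  simp [Polynomial.natDegree_X_pow] at this
  omega

lemma qPochR_ne (k : ℕ) : qPochR k ≠ 0 := by
  unfold qPochR
  rw [Finset.prod_ne_zero_iff]
  intro j hj
  exact one_sub_X_pow_ne (Finset.mem_Icc.mp hj).1

lemma qPochR_succ (k : ℕ) : qPochR (k + 1) = qPochR k * (1 - RatFunc.X ^ (k + 1)) := by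
  unfold qPochR
  rw [← Finset.prod_Icc_succ_top (by omega : 1 ≤ k + 1)]

/-! #### `rsq` lemmas -/

lemma rsq_mul (c : ℤ) (f g : K⟦X⟧) : rsq c (f * g) = rsq c f * rsq c g := map_mul _ _ _

lemma rsq_one (c : ℤ) : rsq c (1 : K⟦X⟧) = 1 := map_one _

lemma rsq_zero (f : K⟦X⟧) : rsq 0 f = f := by
  unfold rsq; rw [zpow_zero, rescale_one]; rfl

lemma rsq_rsq (c d : ℤ) (f : K⟦X⟧) : rsq c (rsq d f) = rsq (c + d) f := by
  unfold rsq
  rw [rescale_rescale, ← zpow_add₀ Xne, add_comm d c]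

lemma coeff_rsq (c : ℤ) (f : K⟦X⟧) (k : ℕ) :
    PowerSeries.coeff k (rsq c f) = RatFunc.X ^ (c * k) * PowerSeries.coeff k f := by
  unfold rsq; rw [coeff_rescale, Xzpow_pow]

lemma constCoeff_rsq (c : ℤ) (f : K⟦X⟧) :
    constantCoeff (rsq c f) = constantCoeff f := by
  rw [← coeff_zero_eq_constantCoeff_apply, ← coeff_zero_eq_constantCoeff_apply, coeff_rsq]
  simp

lemma rsq_inv (c : ℤ) {f : K⟦X⟧} (h : constantCoeff f ≠ 0) :
    rsq c f⁻¹ = (rsq c f)⁻¹ := by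
  have h' : constantCoeff (rsq c f) ≠ 0 := by rwa [constCoeff_rsq]
  rw [PowerSeries.eq_inv_iff_mul_eq_one h', ← rsq_mul, PowerSeries.inv_mul_cancel _ h, rsq_one]

lemma ps_inv_inv {f : K⟦X⟧} (h : constantCoeff f ≠ 0) : f⁻¹⁻¹ = f := by
  have h' : constantCoeff f⁻¹ ≠ 0 := by simp [h]
  rw [PowerSeries.inv_eq_iff_mul_eq_one h', PowerSeries.mul_inv_cancel _ h]

/-! #### `IsIntLaurent` closure lemmas -/

noncomputable def ψ : Polynomial ℤ →+* RatFunc ℚ :=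
  (algebraMap (Polynomial ℚ) (RatFunc ℚ)).comp (Polynomial.mapRingHom (Int.castRingHom ℚ))

lemma isIntLaurent_iff (r : K) : IsIntLaurent r ↔ ∃ P s, r * RatFunc.X ^ s = ψ P := by
  unfold IsIntLaurent ψ
  simp [Polynomial.coe_mapRingHom]

lemma ψ_X : ψ Polynomial.X = RatFunc.X := by
  simp [ψ, Polynomial.coe_mapRingHom, RatFunc.algebraMap_X]

lemma IL_zero : IsIntLaurent 0 := ⟨0, 0, by simp⟩

lemma IL_one : IsIntLaurent 1 := ⟨1, 0, by simp⟩

lemma IL_neg {r : K} (h : IsIntLaurent r) : IsIntLaurent (-r) := by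
  rw [isIntLaurent_iff] at *
  obtain ⟨P, s, hP⟩ := h
  exact ⟨-P, s, by rw [map_neg, ← hP]; ring⟩

lemma IL_mul {r r' : K} (h : IsIntLaurent r) (h' : IsIntLaurent r') : IsIntLaurent (r * r') := by
  rw [isIntLaurent_iff] at *
  obtain ⟨P, s, hP⟩ := h
  obtain ⟨P', s', hP'⟩ := h'
  refine ⟨P * P', s + s', ?_⟩
  rw [map_mul, ← hP, ← hP', pow_add]; ring

lemma IL_add {r r' : K} (h : IsIntLaurent r) (h' : IsIntLaurent r') : IsIntLaurent (r + r') := by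
  rw [isIntLaurent_iff] at *
  obtain ⟨P, s, hP⟩ := h
  obtain ⟨P', s', hP'⟩ := h'
  refine ⟨P * Polynomial.X ^ s' + P' * Polynomial.X ^ s, s + s', ?_⟩
  rw [map_add, map_mul, map_mul, map_pow, map_pow, ψ_X, ← hP, ← hP', pow_add]
  ring

lemma IL_sum {ι : Type*} (t : Finset ι) (f : ι → K) (h : ∀ i ∈ t, IsIntLaurent (f i)) :
    IsIntLaurent (∑ i ∈ t, f i) := by
  classical
  induction t using Finset.induction_on with
  | empty => simpa using IL_zero
  | insert _ _ hx ih =>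
      rw [Finset.sum_insert hx]
      exact IL_add (h _ (Finset.mem_insert_self _ _))
        (ih fun i hi => h i (Finset.mem_insert_of_mem hi))

lemma IL_X_zpow (m : ℤ) : IsIntLaurent ((RatFunc.X : K) ^ m) := by
  rw [isIntLaurent_iff]
  refine ⟨Polynomial.X ^ (m + m.natAbs).toNat, m.natAbs, ?_⟩
  rw [map_pow, ψ_X, ← zpow_natCast (RatFunc.X : K) (m + m.natAbs).toNat,
    ← zpow_natCast (RatFunc.X : K) m.natAbs, ← zpow_add₀ Xne]
  congr 1
  omega

lemma IL_neg_one_zpow (a : ℤ) : IsIntLaurent ((-1 : K) ^ a) := by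
  rcases Int.even_or_odd a with he | ho
  · rw [he.neg_one_zpow]; exact IL_one
  · rw [ho.neg_one_zpow]; exact IL_neg IL_one

/-! #### Power series with integral Laurent coefficients -/

def ILs (f : K⟦X⟧) : Prop := ∀ k : ℕ, IsIntLaurent (PowerSeries.coeff k f)

lemma ILs_one : ILs 1 := by
  intro k
  rw [coeff_one]
  split <;> [exact IL_one; exact IL_zero]

lemma ILs_mul {f g : K⟦X⟧} (hf : ILs f) (hg : ILs g) : ILs (f * g) := by
  intro k
  rw [coeff_mul]
  exact IL_sum _ _ fun p _ => IL_mul (hf p.1) (hg p.2)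

lemma ILs_rsq (c : ℤ) {f : K⟦X⟧} (hf : ILs f) : ILs (rsq c f) := by
  intro k
  rw [coeff_rsq]
  exact IL_mul (IL_X_zpow _) (hf k)

lemma ILs_inv {f : K⟦X⟧} (hf : ILs f) (h1 : constantCoeff f = 1) : ILs f⁻¹ := by
  intro k
  induction k using Nat.strong_induction_on with
  | _ k ih =>
    rw [PowerSeries.coeff_inv]
    split
    · rw [h1, inv_one]; exact IL_one
    · rw [h1, inv_one, neg_one_mul]
      refine IL_neg (IL_sum _ _ fun p hp => ?_)
      split
      · next h2 => exact IL_mul (hf p.1) (ih p.2 h2)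
      · exact IL_zero

lemma ILs_prod {ι : Type} (t : Finset ι) (f : ι → K⟦X⟧) (h : ∀ i ∈ t, ILs (f i)) :
    ILs (∏ i ∈ t, f i) := by
  classical
  induction t using Finset.induction_on with
  | empty => simpa using ILs_one
  | insert _ _ hx ih =>
      rw [Finset.prod_insert hx]
      exact ILs_mul (h _ (Finset.mem_insert_self _ _))
        (ih fun i hi => h i (Finset.mem_insert_of_mem hi))

/-! #### Coefficientwise congruence up to degree `n` -/

def CE (n : ℕ) (f g : K⟦X⟧) : Prop :=
  ∀ k ≤ n, PowerSeries.coeff k f = PowerSeries.coeff k g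

lemma CE_mul {n : ℕ} {f g f' g' : K⟦X⟧} (hf : CE n f f') (hg : CE n g g') :
    CE n (f * g) (f' * g') := by
  intro k hk
  rw [coeff_mul, coeff_mul]
  refine Finset.sum_congr rfl fun p hp => ?_
  rw [Finset.HasAntidiagonal.mem_antidiagonal] at hp
  rw [hf p.1 (by omega), hg p.2 (by omega)]

lemma CE_rsq {n : ℕ} (c : ℤ) {f g : K⟦X⟧} (h : CE n f g) : CE n (rsq c f) (rsq c g) := by
  intro k hk
  rw [coeff_rsq, coeff_rsq, h k hk]

lemma CE_inv {n : ℕ} {f g : K⟦X⟧} (h : CE n f g) : CE n f⁻¹ g⁻¹ := by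
  intro k hk
  induction k using Nat.strong_induction_on with
  | _ k ih =>
    have hc : constantCoeff f = constantCoeff g := by
      rw [← coeff_zero_eq_constantCoeff_apply, ← coeff_zero_eq_constantCoeff_apply]
      exact h 0 (Nat.zero_le n)
    rw [PowerSeries.coeff_inv, PowerSeries.coeff_inv, hc]
    split
    · rfl
    · congr 1
      refine Finset.sum_congr rfl fun p hp => ?_
      rw [Finset.HasAntidiagonal.mem_antidiagonal] at hp
      split
      · next h2 => rw [h p.1 (by omega), ih p.2 h2 (by omega)]
      · rfl

lemma CE_prod {n : ℕ} {ι : Type} (t : Finset ι) (f g : ι → K⟦X⟧)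
    (h : ∀ i ∈ t, CE n (f i) (g i)) : CE n (∏ i ∈ t, f i) (∏ i ∈ t, g i) := by
  classical
  induction t using Finset.induction_on with
  | empty => intro k hk; rfl
  | insert _ _ hx ih =>
      rw [Finset.prod_insert hx, Finset.prod_insert hx]
      exact CE_mul (h _ (Finset.mem_insert_self _ _))
        (ih fun i hi => h i (Finset.mem_insert_of_mem hi))

/-! #### Facts about the Nahm sum -/

lemma coeff_nahm (A : ℤ) (k : ℕ) :
    PowerSeries.coeff k (nahmF1 A) =
      (-1 : K) ^ (A * (k : ℤ)) *
        RatFunc.X ^ ((A * (k : ℤ) * ((k : ℤ) + 1)) / 2) / qPochR k := by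
  unfold nahmF1; rw [coeff_mk]

lemma constCoeff_nahm (A : ℤ) : constantCoeff (nahmF1 A) = 1 := by
  rw [← coeff_zero_eq_constantCoeff_apply, coeff_nahm]
  norm_num [qPochR]

lemma E_succ (A : ℤ) (k : ℕ) :
    (A * ((k : ℤ) + 1) * (((k : ℤ) + 1) + 1)) / 2
      = (A * (k : ℤ) * ((k : ℤ) + 1)) / 2 + A * ((k : ℤ) + 1) := by
  obtain ⟨m, hm⟩ := Int.even_mul_succ_self (k : ℤ)
  have h1 : A * (k : ℤ) * ((k : ℤ) + 1) = 2 * (A * m) := by linear_combination A * hm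
  have h2 : A * ((k : ℤ) + 1) * (((k : ℤ) + 1) + 1)
      = 2 * (A * m + A * ((k : ℤ) + 1)) := by linear_combination A * hm
  rw [h1, h2, Int.mul_ediv_cancel_left _ two_ne_zero, Int.mul_ediv_cancel_left _ two_ne_zero]

/-- The key functional equation `F(t) - F(qt) = (-1)^A q^A t F(q^A t)`. -/
lemma funcEq (A : ℤ) :
    nahmF1 A - rsq 1 (nahmF1 A) =
      PowerSeries.C ((-1 : K) ^ A * RatFunc.X ^ A) *
        (PowerSeries.X * rsq A (nahmF1 A)) := by
  ext k
  rw [map_sub, coeff_C_mul]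
  cases k with
  | zero =>
      rw [coeff_zero_X_mul, coeff_rsq]
      simp
  | succ n =>
      rw [coeff_succ_X_mul, coeff_rsq, coeff_rsq, coeff_nahm, coeff_nahm, qPochR_succ]
      have hq := qPochR_ne n
      have h1 := one_sub_X_pow_ne (by omega : 1 ≤ n + 1)
      have hXnn : (RatFunc.X : K) ^ ((1 : ℤ) * ((n : ℤ) + 1)) = RatFunc.X ^ (n + 1) := by
        rw [one_mul, ← zpow_natCast (RatFunc.X : K) (n + 1)]
        norm_num
      push_cast
      rw [hXnn]
      have hE : A * ((n : ℤ) + 1) * ((n : ℤ) + 1 + 1) / 2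
          = A * (n : ℤ) * ((n : ℤ) + 1) / 2 + A * ((n : ℤ) + 1) := E_succ A n
      have hsgn : (-1 : K) ^ (A * ((n : ℤ) + 1)) = (-1 : K) ^ A * (-1 : K) ^ (A * (n : ℤ)) := by
        rw [← zpow_add₀ (by norm_num : (-1 : K) ≠ 0)]
        congr 1; ring
      have hX : (RatFunc.X : K) ^ (A * ((n : ℤ) + 1) * ((n : ℤ) + 1 + 1) / 2)
          = RatFunc.X ^ A * RatFunc.X ^ (A * (n : ℤ)) *
            RatFunc.X ^ (A * (n : ℤ) * ((n : ℤ) + 1) / 2) := by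
        rw [← zpow_add₀ Xne, ← zpow_add₀ Xne, hE]
        congr 1; ring
      rw [hsgn, hX]
      field_simp

lemma constCoeff_rsq_nahm (A c : ℤ) : constantCoeff (rsq c (nahmF1 A)) = 1 := by
  rw [constCoeff_rsq, constCoeff_nahm]

lemma constCoeff_G (A : ℤ) : constantCoeff (ratioG A) = 1 := by
  unfold ratioG
  rw [map_mul, PowerSeries.constantCoeff_inv, constCoeff_rsq_nahm, constCoeff_nahm]
  norm_num

lemma rsq_G (A c : ℤ) :
    rsq c (ratioG A) = rsq (c + 1) (nahmF1 A) * (rsq c (nahmF1 A))⁻¹ := by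
  unfold ratioG
  rw [rsq_mul, rsq_rsq, rsq_inv c (by rw [constCoeff_nahm]; norm_num)]

lemma tele (A a : ℤ) (n : ℕ) :
    ∏ j ∈ Finset.range n, rsq (a + (j : ℤ)) (ratioG A) =
      rsq (a + (n : ℤ)) (nahmF1 A) * (rsq a (nahmF1 A))⁻¹ := by
  induction n with
  | zero =>
      rw [Finset.range_zero, Finset.prod_empty]
      push_cast
      rw [add_zero, PowerSeries.mul_inv_cancel _ (by rw [constCoeff_rsq_nahm]; norm_num)]
  | succ n ih =>
      rw [Finset.prod_range_succ, ih, rsq_G]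
      have hcc : constantCoeff (rsq (a + (n : ℤ)) (nahmF1 A)) ≠ 0 := by
        rw [constCoeff_rsq_nahm]; norm_num
      have hre : rsq (a + (n : ℤ)) (nahmF1 A) * (rsq a (nahmF1 A))⁻¹ *
          (rsq (a + (n : ℤ) + 1) (nahmF1 A) * (rsq (a + (n : ℤ)) (nahmF1 A))⁻¹)
          = (rsq (a + (n : ℤ)) (nahmF1 A) * (rsq (a + (n : ℤ)) (nahmF1 A))⁻¹) *
            (rsq (a + (n : ℤ) + 1) (nahmF1 A) * (rsq a (nahmF1 A))⁻¹) := by ring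
      rw [hre, PowerSeries.mul_inv_cancel _ hcc, one_mul]
      congr 2
      push_cast; ring

lemma ps_prod_inv {ι : Type} (t : Finset ι) (f : ι → K⟦X⟧) :
    ∏ i ∈ t, (f i)⁻¹ = (∏ i ∈ t, f i)⁻¹ := by
  classical
  induction t using Finset.induction_on with
  | empty => simp
  | insert _ _ hx ih =>
      rw [Finset.prod_insert hx, Finset.prod_insert hx, ih, PowerSeries.mul_inv_rev, mul_comm]

lemma riccatiProd_eq (A : ℤ) :
    riccatiProd A (ratioG A) = rsq A (nahmF1 A) * (nahmF1 A)⁻¹ := by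
  unfold riccatiProd
  split
  · next h =>
      have h0 : ∀ j : ℕ, rsq (j : ℤ) (ratioG A) = rsq (0 + (j : ℤ)) (ratioG A) := by
        intro j; rw [zero_add]
      calc ∏ j ∈ Finset.range A.toNat, rsq (j : ℤ) (ratioG A)
          = ∏ j ∈ Finset.range A.toNat, rsq (0 + (j : ℤ)) (ratioG A) :=
            Finset.prod_congr rfl fun j _ => h0 j
        _ = rsq (0 + (A.toNat : ℤ)) (nahmF1 A) * (rsq 0 (nahmF1 A))⁻¹ := tele A 0 A.toNat
        _ = rsq A (nahmF1 A) * (nahmF1 A)⁻¹ := by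
            rw [zero_add, Int.toNat_of_nonneg h, rsq_zero]
  · next h =>
      push_neg at h
      rw [ps_prod_inv, tele A A (-A).toNat]
      have h0 : A + ((-A).toNat : ℤ) = 0 := by omega
      rw [h0, rsq_zero, PowerSeries.mul_inv_rev,
        ps_inv_inv (by rw [constCoeff_rsq_nahm]; norm_num), mul_comm]

lemma riccati (A : ℤ) :
    1 - ratioG A =
      PowerSeries.C ((-1 : K) ^ A * RatFunc.X ^ A) *
        (PowerSeries.X * riccatiProd A (ratioG A)) := by
  rw [riccatiProd_eq]
  have hF : constantCoeff (nahmF1 A) ≠ 0 := by rw [constCoeff_nahm]; norm_num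
  calc 1 - ratioG A = (nahmF1 A - rsq 1 (nahmF1 A)) * (nahmF1 A)⁻¹ := by
        unfold ratioG
        rw [sub_mul, PowerSeries.mul_inv_cancel _ hF]
    _ = PowerSeries.C ((-1 : K) ^ A * RatFunc.X ^ A) *
        (PowerSeries.X * (rsq A (nahmF1 A) * (nahmF1 A)⁻¹)) := by
        rw [funcEq]; ring

/-! #### Integrality -/

lemma intG (A : ℤ) : ∀ k : ℕ, IsIntLaurent (PowerSeries.coeff k (ratioG A)) := by
  intro k
  induction k using Nat.strong_induction_on with
  | _ k ih =>
    match k with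
    | 0 =>
        rw [coeff_zero_eq_constantCoeff_apply, constCoeff_G]
        exact IL_one
    | n + 1 =>
        set G := ratioG A with hGdef
        set Gn : K⟦X⟧ := PowerSeries.mk fun k => if k ≤ n then PowerSeries.coeff k G else 0
          with hGn
        have hCE : CE n Gn G := by
          intro k hk; rw [hGn, coeff_mk, if_pos hk]
        have hILGn : ILs Gn := by
          intro k
          rw [hGn, coeff_mk]
          split
          · next hk => exact ih k (by omega)
          · exact IL_zero
        have hc0 : constantCoeff Gn = 1 := by
          rw [← coeff_zero_eq_constantCoeff_apply, hCE 0 (Nat.zero_le n),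
            coeff_zero_eq_constantCoeff_apply, constCoeff_G]
        have hIL : ILs (riccatiProd A Gn) := by
          unfold riccatiProd
          split
          · exact ILs_prod _ _ fun j _ => ILs_rsq _ hILGn
          · exact ILs_prod _ _ fun j _ =>
              ILs_inv (ILs_rsq _ hILGn) (by rw [constCoeff_rsq, hc0])
        have hCEP : CE n (riccatiProd A Gn) (riccatiProd A G) := by
          unfold riccatiProd
          split
          · exact CE_prod _ _ _ fun j _ => CE_rsq _ hCE
          · exact CE_prod _ _ _ fun j _ => CE_inv (CE_rsq _ hCE)
        have h2 := congrArg (PowerSeries.coeff (n + 1)) (riccati A)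
        rw [map_sub, coeff_C_mul, coeff_succ_X_mul, coeff_one, if_neg (Nat.succ_ne_zero n)] at h2
        have h3 : PowerSeries.coeff (n + 1) G =
            -((-1 : K) ^ A * RatFunc.X ^ A *
              PowerSeries.coeff n (riccatiProd A Gn)) := by
          rw [hCEP n le_rfl]
          linear_combination -h2
        rw [h3]
        exact IL_neg (IL_mul (IL_mul (IL_neg_one_zpow A) (IL_X_zpow A)) (hIL n))

theorem statement8 (A : ℤ) :
    (∀ k : ℕ, IsIntLaurent (PowerSeries.coeff k (ratioG A))) ∧
    1 - ratioG A =
      PowerSeries.C ((-1 : RatFunc ℚ) ^ A * RatFunc.X ^ A) *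
        (PowerSeries.X * riccatiProd A (ratioG A)) := by
  exact ⟨intG A, riccati A⟩
end

section
/- Let N ≥ 1 and let (L_n)_{n∈ℕ^N∖{0}} be a family of Laurent polynomials L_n ∈ ℤ[q,q^{−1}] (the data of an admissible series). Let p be a prime, m ≥ 1 an integer with p ∤ m, and ζ a primitive m-th root of unity. Substituting q = ζ + x and expanding each rational function of x as a Laurent series at x = 0, the series D(t,x) := p · ∑_{n≠0} ∑_{ℓ≥1, p∤ℓ} (L_n((ζ+x)^ℓ)/(ℓ(1−(ζ+x)^ℓ))) · t^{ℓn} is a well-defined element of x^{−1}·ℚ(ζ)[[t_1,…,t_N,x]] with at most a simple pole at x = 0, and x·D(t,x) ∈ p·ℤ_{(p)}[ζ][[t_1,…,t_N,x]]. (Here D(t,x) is the expansion at q = ζ + x of log F(t^p,q^p) − p·log F(t,q) for the admissible series F with data (L_n).) -/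
/-!
STATEMENT 10: Given the data `(L_n)` of an admissible series (integer Laurent
polynomials), a prime `p`, `m ≥ 1` with `p ∤ m`, and a primitive `m`-th root of unity
`ζ`, the expansion at `q = ζ + x` of `log F(t^p,q^p) - p log F(t,q)`, namely
`D(t,x) = p ∑_{n≠0} ∑_{ℓ≥1, p∤ℓ} (L_n((ζ+x)^ℓ)/(ℓ(1-(ζ+x)^ℓ))) t^{ℓn}`,
has (in each `t`-degree) at most a simple pole at `x = 0`, and
`x · D(t,x) ∈ p · ℤ_{(p)}[ζ][[t,x]]`.
-/

/-- `x` as a Laurent series. -/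
noncomputable def xLau (F : Type*) [Field F] : LaurentSeries F := HahnSeries.single 1 1

/-- Evaluation of an integer Laurent polynomial at an invertible element of a field of
Laurent series. -/
noncomputable def evalLaurentPoly {F : Type*} [Field F] (w : LaurentSeries F)
    (P : LaurentPolynomial ℤ) : LaurentSeries F :=
  Finsupp.sum P.coeff fun e c => (c : LaurentSeries F) * w ^ e

/-- The expansion at `q = ζ + x` of `log F(t^p,q^p) - p·log F(t,q)` for the admissible
series `F` with data `(L_n)`:
`D(t,x) = p ∑_{n≠0} ∑_{ℓ≥1,p∤ℓ} (L_n((ζ+x)^ℓ)/(ℓ(1-(ζ+x)^ℓ))) t^{ℓn}`,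
an element of `ℚ(ζ)((x))[[t_1,…,t_N]]`, summed coefficientwise in `t`. -/
noncomputable def dworkDiff {F : Type*} [Field F] (N p : ℕ) (ζ : F)
    (L : (Fin N →₀ ℕ) → LaurentPolynomial ℤ) :
    MvPowerSeries (Fin N) (LaurentSeries F) :=
  fun d => (p : LaurentSeries F) * ∑ᶠ x : (Fin N →₀ ℕ) × ℕ,
    (if x.1 ≠ 0 ∧ 1 ≤ x.2 ∧ ¬ p ∣ x.2 then
      MvPowerSeries.coeff d
        ((MvPowerSeries.monomial (x.2 • x.1))
          (evalLaurentPoly (((HahnSeries.C ζ : LaurentSeries F) + xLau F) ^ x.2) (L x.1) *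
            (((x.2 : LaurentSeries F)) *
              (1 - ((HahnSeries.C ζ : LaurentSeries F) + xLau F) ^ x.2))⁻¹))
    else 0)

/-- `y` lies in the subring `ℤ_{(p)}[ζ]` of `F`: `y = P(ζ)/b` with `P ∈ ℤ[X]`, `p ∤ b`. -/
def InZpZeta {F : Type*} [Field F] (p : ℕ) (ζ : F) (y : F) : Prop :=
  ∃ (P : Polynomial ℤ) (b : ℕ), ¬ (p ∣ b) ∧ (b : F) * y = Polynomial.aeval ζ P

section Aux

open Polynomial

variable {F : Type*} [Field F]

def zpSubring (p : ℕ) (hp : p.Prime) (ζ : F) : Subring F where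
  carrier := {y | InZpZeta p ζ y}
  zero_mem' := ⟨0, 1, fun h => hp.ne_one (Nat.dvd_one.mp h), by simp⟩
  one_mem' := ⟨1, 1, fun h => hp.ne_one (Nat.dvd_one.mp h), by simp⟩
  add_mem' := by
    rintro a b ⟨P, s, hs, hP⟩ ⟨Q, t, ht, hQ⟩
    refine ⟨C (t : ℤ) * P + C (s : ℤ) * Q, s * t,
      fun h => ((hp.dvd_mul).mp h).elim hs ht, ?_⟩
    push_cast [map_add, map_mul, aeval_C]
    linear_combination (t : F) * hP + (s : F) * hQ
  neg_mem' := by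
    rintro a ⟨P, s, hs, hP⟩
    exact ⟨-P, s, hs, by rw [mul_neg, hP, map_neg]⟩
  mul_mem' := by
    rintro a b ⟨P, s, hs, hP⟩ ⟨Q, t, ht, hQ⟩
    refine ⟨P * Q, s * t, fun h => ((hp.dvd_mul).mp h).elim hs ht, ?_⟩
    push_cast [map_mul]
    linear_combination ((t : F) * b) * hP + (Polynomial.aeval ζ P) * hQ

lemma mem_zpSubring {p : ℕ} {hp : p.Prime} {ζ y : F} :
    y ∈ zpSubring p hp ζ ↔ InZpZeta p ζ y := Iff.rfl

variable [CharZero F]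

lemma natInv_mem (p : ℕ) (hp : p.Prime) (ζ : F) {b : ℕ} (hb : ¬ p ∣ b) :
    ((b : F))⁻¹ ∈ zpSubring p hp ζ := by
  have hb0 : (b : F) ≠ 0 := Nat.cast_ne_zero.2 (by rintro rfl; exact hb (dvd_zero p))
  exact ⟨1, b, hb, by simp [mul_inv_cancel₀ hb0]⟩

lemma zeta_mem (p : ℕ) (hp : p.Prime) (ζ : F) : ζ ∈ zpSubring p hp ζ :=
  ⟨X, 1, fun h => hp.ne_one (Nat.dvd_one.mp h), by simp⟩

lemma zetaInv_mem (p m : ℕ) (hp : p.Prime) (hm : 0 < m) {ζ : F}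
    (hζ : IsPrimitiveRoot ζ m) : ζ⁻¹ ∈ zpSubring p hp ζ := by
  have h1 : ζ * ζ ^ (m - 1) = 1 := by
    rw [← pow_succ', Nat.sub_add_cancel hm, hζ.pow_eq_one]
  rw [inv_eq_of_mul_eq_one_right h1]
  exact pow_mem (zeta_mem p hp ζ) _

lemma one_sub_pow_inv_mem (p m : ℕ) (hp : p.Prime) (hm : 0 < m) (hpm : ¬ p ∣ m)
    {ζ : F} (hζ : IsPrimitiveRoot ζ m) {ℓ : ℕ} (hz : ζ ^ ℓ ≠ 1) :
    (1 - ζ ^ ℓ)⁻¹ ∈ zpSubring p hp ζ := by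
  obtain ⟨n, rfl⟩ : ∃ n, m = n + 1 := ⟨m - 1, (Nat.succ_pred_eq_of_pos hm).symm⟩
  have hprod := hζ.prod_one_sub_pow_eq_order
  set k0 := ℓ % (n + 1) with hk0
  have hzp : ζ ^ ℓ = ζ ^ k0 := by
    conv_lhs => rw [← Nat.div_add_mod ℓ (n + 1)]
    rw [pow_add, pow_mul, hζ.pow_eq_one, one_pow, one_mul]
  have hk0ne : k0 ≠ 0 := fun h => hz (by rw [hzp, h, pow_zero])
  obtain ⟨k1, hk1⟩ : ∃ k1, k0 = k1 + 1 := ⟨k0 - 1, by omega⟩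
  have hk1lt : k1 < n := by
    have := Nat.mod_lt ℓ (show 0 < n + 1 by omega)
    omega
  have hmem : k1 ∈ Finset.range n := Finset.mem_range.2 hk1lt
  have hm0 : ((n : F) + 1) ≠ 0 := by
    have : ((n + 1 : ℕ) : F) ≠ 0 := Nat.cast_ne_zero.2 (Nat.succ_ne_zero n)
    push_cast at this; exact this
  have key : (1 - ζ ^ ℓ) *
      ((∏ k ∈ (Finset.range n).erase k1, (1 - ζ ^ (k + 1))) * ((n : F) + 1)⁻¹) = 1 := by
    rw [hzp, hk1, ← mul_assoc]
    rw [show ((1 : F) - ζ ^ (k1 + 1)) * ∏ k ∈ (Finset.range n).erase k1, (1 - ζ ^ (k + 1)) =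
        ∏ k ∈ Finset.range n, (1 - ζ ^ (k + 1)) from
      Finset.mul_prod_erase (Finset.range n) (fun k => (1 : F) - ζ ^ (k + 1)) hmem]
    rw [hprod, mul_inv_cancel₀ hm0]
  rw [inv_eq_of_mul_eq_one_right key]
  refine mul_mem (prod_mem fun k _ => sub_mem (one_mem _) (pow_mem (zeta_mem p hp ζ) _)) ?_
  have : ((n : F) + 1) = ((n + 1 : ℕ) : F) := by push_cast; ring
  rw [this]
  exact natInv_mem p hp ζ hpm

end Aux

section PS

variable {F : Type*} [Field F]

noncomputable def phiPS (S : Subring F) : PowerSeries S →+* LaurentSeries F :=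
  (HahnSeries.ofPowerSeries ℤ F).comp (PowerSeries.map S.subtype)

lemma phiPS_coeff (S : Subring F) (g : PowerSeries S) (n : ℕ) :
    (phiPS S g).coeff (n : ℤ) = ((PowerSeries.coeff n g : S) : F) := by
  simp [phiPS, HahnSeries.ofPowerSeries_apply_coeff]

lemma phiPS_coeff_neg (S : Subring F) (g : PowerSeries S) {i : ℤ} (hi : i < 0) :
    (phiPS S g).coeff i = 0 := by
  rw [phiPS, RingHom.comp_apply, HahnSeries.ofPowerSeries_apply]
  apply HahnSeries.embDomain_notin_range
  rintro ⟨n, hn⟩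
  replace hn : ((n : ℕ) : ℤ) = i := hn
  omega

lemma range_coeff_mem (S : Subring F) {w : LaurentSeries F}
    (hw : w ∈ (phiPS S).range) (i : ℤ) : w.coeff i ∈ S := by
  obtain ⟨g, rfl⟩ := hw
  rcases le_or_gt 0 i with h | h
  · obtain ⟨n, rfl⟩ := Int.eq_ofNat_of_zero_le h
    rw [phiPS_coeff]
    exact SetLike.coe_mem _
  · rw [phiPS_coeff_neg S g h]
    exact zero_mem S

lemma range_coeff_neg (S : Subring F) {w : LaurentSeries F}
    (hw : w ∈ (phiPS S).range) {i : ℤ} (hi : i < 0) : w.coeff i = 0 := by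
  obtain ⟨g, rfl⟩ := hw
  exact phiPS_coeff_neg S g hi

lemma inv_mem_range (S : Subring F) (g : PowerSeries S)
    (h : IsUnit (PowerSeries.constantCoeff g)) :
    (phiPS S g)⁻¹ ∈ (phiPS S).range := by
  obtain ⟨u, hu⟩ := PowerSeries.isUnit_iff_constantCoeff.mpr h
  refine ⟨(↑u⁻¹ : PowerSeries S), ?_⟩
  symm
  apply inv_eq_of_mul_eq_one_right
  rw [← hu, ← map_mul, Units.mul_inv, map_one]

lemma isUnit_subring {S : Subring F} {a : S} (h0 : (a : F) ≠ 0)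
    (h : ((a : F))⁻¹ ∈ S) : IsUnit a := by
  refine IsUnit.of_mul_eq_one (a := a) ⟨_, h⟩ (Subtype.ext ?_)
  push_cast
  exact mul_inv_cancel₀ h0

lemma xLau_eq (S : Subring F) : xLau F = phiPS S PowerSeries.X := by
  simp [phiPS, PowerSeries.map_X, HahnSeries.ofPowerSeries_X, xLau]

lemma Cz_eq (S : Subring F) (a : S) :
    (HahnSeries.C (a : F) : LaurentSeries F) = phiPS S (PowerSeries.C a) := by
  simp [phiPS, PowerSeries.map_C, HahnSeries.ofPowerSeries_C]

end PS

section Term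

variable {F : Type*} [Field F] [CharZero F]

lemma term_mem (p m : ℕ) (hp : p.Prime) (hm : 0 < m) (hpm : ¬ p ∣ m)
    {ζ : F} (hζ : IsPrimitiveRoot ζ m) (P : LaurentPolynomial ℤ)
    {ℓ : ℕ} (h1 : 1 ≤ ℓ) (h2 : ¬ p ∣ ℓ) :
    xLau F * (evalLaurentPoly (((HahnSeries.C ζ : LaurentSeries F) + xLau F) ^ ℓ) P *
      (((ℓ : LaurentSeries F)) *
        (1 - ((HahnSeries.C ζ : LaurentSeries F) + xLau F) ^ ℓ))⁻¹) ∈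
      (phiPS (zpSubring p hp ζ)).range := by
  set S := zpSubring p hp ζ with hS
  have hζS : ζ ∈ S := zeta_mem p hp ζ
  set ζ' : S := ⟨ζ, hζS⟩ with hζ'
  set φ := phiPS S with hφ
  have hζ0 : ζ ≠ 0 := hζ.ne_zero hm.ne'
  have hℓ0 : (ℓ : F) ≠ 0 := Nat.cast_ne_zero.2 (by omega)
  set U : PowerSeries S := (PowerSeries.C ζ' + PowerSeries.X) ^ ℓ with hU
  have hu : ((HahnSeries.C ζ : LaurentSeries F) + xLau F) ^ ℓ = φ U := by
    rw [hU, map_pow, map_add, ← Cz_eq, ← xLau_eq]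
  have hUc : PowerSeries.constantCoeff U = ζ' ^ ℓ := by
    rw [hU, map_pow, map_add, PowerSeries.constantCoeff_C, PowerSeries.constantCoeff_X, add_zero]
  have hζ'unit : IsUnit ζ' := isUnit_subring hζ0 (zetaInv_mem p m hp hm hζ)
  have hUunit : IsUnit (PowerSeries.constantCoeff U) := hUc ▸ hζ'unit.pow ℓ
  have hXmem : xLau F ∈ φ.range := ⟨PowerSeries.X, (xLau_eq S).symm⟩
  have hevalmem : evalLaurentPoly (φ U) P ∈ φ.range := by
    rw [evalLaurentPoly, Finsupp.sum]
    refine sum_mem fun e _ => mul_mem (intCast_mem _ _) ?_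
    rcases le_or_gt 0 e with he | he
    · lift e to ℕ using he
      rw [zpow_natCast]
      exact pow_mem (RingHom.mem_range_self φ U) _
    · have hee : e = -(((-e).toNat : ℕ) : ℤ) := by omega
      rw [hee, zpow_neg, zpow_natCast, ← map_pow]
      exact inv_mem_range S _ (by rw [map_pow]; exact hUunit.pow _)
  rw [hu]
  by_cases hz : ζ ^ ℓ = 1
  · -- simple pole case
    set V : PowerSeries S := (ℓ : PowerSeries S) * (1 - U) with hV
    have hVc : PowerSeries.constantCoeff V = 0 := by
      apply Subtype.ext
      rw [hV, map_mul, map_sub, map_one, hUc]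
      push_cast
      rw [hz]
      ring
    obtain ⟨g, hg⟩ := PowerSeries.X_dvd_iff.mpr hVc
    have hpoly : U = (((Polynomial.X + Polynomial.C ζ' : Polynomial S) ^ ℓ :
        Polynomial S) : PowerSeries S) := by
      rw [Polynomial.coe_pow, Polynomial.coe_add, Polynomial.coe_X, Polynomial.coe_C, hU,
        add_comm]
    have hcoeff1U : PowerSeries.coeff 1 U = ζ' ^ (ℓ - 1) * ℓ := by
      rw [hpoly, Polynomial.coeff_coe, Polynomial.coeff_X_add_C_pow]
      norm_num
    have hg0 : (((PowerSeries.constantCoeff g : S) : F)) = -((ℓ : F) * (ζ ^ (ℓ - 1) * ℓ)) := by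
      have h1' : PowerSeries.coeff 1 V = PowerSeries.constantCoeff g := by
        rw [hg, ← PowerSeries.coeff_zero_eq_constantCoeff]
        exact PowerSeries.coeff_succ_X_mul 0 g
      have h2' : PowerSeries.coeff 1 V = -((ℓ : S) * (ζ' ^ (ℓ - 1) * ℓ)) := by
        rw [hV, show ((ℓ : PowerSeries S)) = PowerSeries.C (ℓ : S) from (map_natCast _ _).symm,
          PowerSeries.coeff_C_mul, map_sub, hcoeff1U, PowerSeries.coeff_one]
        norm_num
      rw [← h1', h2']
      push_cast
      ring
    have hgunit : IsUnit (PowerSeries.constantCoeff g) := by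
      apply isUnit_subring
      · rw [hg0]
        exact neg_ne_zero.2 (mul_ne_zero hℓ0 (mul_ne_zero (pow_ne_zero _ hζ0) hℓ0))
      · have hval : (((PowerSeries.constantCoeff g : S) : F))⁻¹ = -(ζ * (((ℓ * ℓ : ℕ) : F))⁻¹) := by
          apply inv_eq_of_mul_eq_one_right
          rw [hg0]
          have hz1 : ζ ^ (ℓ - 1) * ζ = 1 := by rw [← pow_succ, Nat.sub_add_cancel h1, hz]
          push_cast
          field_simp
          linear_combination hz1
        rw [hval]
        exact neg_mem (mul_mem hζS (natInv_mem p hp ζ (fun h => (hp.dvd_mul.mp h).elim h2 h2)))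
    have hVeq : (ℓ : LaurentSeries F) * (1 - φ U) = xLau F * φ g := by
      have : φ V = φ (PowerSeries.X * g) := by rw [← hg]
      rw [hV, map_mul, map_natCast, map_sub, map_one] at this
      rw [this, map_mul, ← xLau_eq]
    have hx0 : xLau F ≠ 0 := HahnSeries.single_ne_zero one_ne_zero
    rw [hVeq, mul_inv]
    rw [show xLau F * (evalLaurentPoly (φ U) P * ((xLau F)⁻¹ * (φ g)⁻¹)) =
        (xLau F * (xLau F)⁻¹) * (evalLaurentPoly (φ U) P * (φ g)⁻¹) from by ring,
      mul_inv_cancel₀ hx0, one_mul]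
    exact mul_mem hevalmem (inv_mem_range S g hgunit)
  · -- no pole case
    set V : PowerSeries S := (ℓ : PowerSeries S) * (1 - U) with hV
    have hVc : (((PowerSeries.constantCoeff V : S) : F)) = (ℓ : F) * (1 - ζ ^ ℓ) := by
      rw [hV, map_mul, map_sub, map_one, hUc, map_natCast]
      push_cast
      ring
    have hVunit : IsUnit (PowerSeries.constantCoeff V) := by
      apply isUnit_subring
      · rw [hVc]
        exact mul_ne_zero hℓ0 (sub_ne_zero.2 (Ne.symm hz))
      · rw [hVc, mul_inv]
        exact mul_mem (natInv_mem p hp ζ h2)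
          (one_sub_pow_inv_mem p m hp hm hpm hζ hz)
    have hVeq : (ℓ : LaurentSeries F) * (1 - φ U) = φ V := by
      rw [hV, map_mul, map_natCast, map_sub, map_one]
    rw [hVeq]
    exact mul_mem hXmem (mul_mem hevalmem (inv_mem_range S V hVunit))

end Term

theorem statement10 (N p m : ℕ) (hp : p.Prime) (hm : 0 < m) (hpm : ¬ p ∣ m)
    (F : Type*) [Field F] [CharZero F] (ζ : F) (hζ : IsPrimitiveRoot ζ m)
    (L : (Fin N →₀ ℕ) → LaurentPolynomial ℤ) (d : Fin N →₀ ℕ) :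
    (∀ i : ℤ, i < -1 →
      HahnSeries.coeff (MvPowerSeries.coeff d (dworkDiff N p ζ L)) i
        = 0) ∧
    (∀ i : ℤ, ∃ y : F, InZpZeta p ζ y ∧
      HahnSeries.coeff
          (xLau F * MvPowerSeries.coeff d (dworkDiff N p ζ L)) i
        = (p : F) * y) := by
  classical
  set S := zpSubring p hp ζ with hS
  set φ := phiPS S with hφ
  set f : (Fin N →₀ ℕ) × ℕ → LaurentSeries F := fun x =>
    (if x.1 ≠ 0 ∧ 1 ≤ x.2 ∧ ¬ p ∣ x.2 then
      MvPowerSeries.coeff d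
        ((MvPowerSeries.monomial (x.2 • x.1))
          (evalLaurentPoly (((HahnSeries.C ζ : LaurentSeries F) + xLau F) ^ x.2) (L x.1) *
            (((x.2 : LaurentSeries F)) *
              (1 - ((HahnSeries.C ζ : LaurentSeries F) + xLau F) ^ x.2))⁻¹))
    else 0) with hf
  have hco : MvPowerSeries.coeff d (dworkDiff N p ζ L)
      = (p : LaurentSeries F) * ∑ᶠ x, f x := by
    rw [MvPowerSeries.coeff_apply, dworkDiff]
  have hsupp : Function.support f ⊆
      ↑((Finset.Iic d) ×ˢ Finset.Icc 1 (d.sum fun _ v => v)) := by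
    rintro ⟨n, ℓ⟩ hx
    simp only [Function.mem_support, hf] at hx
    split_ifs at hx with hcond
    swap
    · exact absurd rfl hx
    obtain ⟨hn0, hl1, -⟩ := hcond
    have hd : ℓ • n = d := by
      by_contra h
      exact hx (MvPowerSeries.coeff_monomial_ne (fun hh => h hh.symm) _)
    obtain ⟨i, hi⟩ : ∃ i, n i ≠ 0 := by
      by_contra h
      push_neg at h
      exact hn0 (Finsupp.ext h)
    have hdi : ∀ j, d j = ℓ * n j := fun j => by
      rw [← hd, Finsupp.smul_apply, smul_eq_mul]
    refine Finset.mem_coe.2 (Finset.mem_product.2 ⟨Finset.mem_Iic.2 ?_, Finset.mem_Icc.2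
      ⟨hl1, ?_⟩⟩)
    · refine (Finsupp.le_iff n d).2 fun j _ => ?_
      rw [hdi j]
      exact Nat.le_mul_of_pos_left _ (by omega)
    · have h1' : ℓ ≤ d i := by
        rw [hdi i]
        exact Nat.le_mul_of_pos_right ℓ (by omega)
      have h2' : d i ≤ d.sum fun _ v => v := by
        rw [Finsupp.sum]
        exact Finset.single_le_sum (fun j _ => Nat.zero_le _)
          (Finsupp.mem_support_iff.2 (by omega))
      omega
  have hterm : ∀ x, xLau F * f x ∈ φ.range := by
    rintro ⟨n, ℓ⟩
    simp only [hf]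
    split_ifs with hcond
    · rcases eq_or_ne (ℓ • n) d with hd | hd
      · rw [hd, MvPowerSeries.coeff_monomial_same]
        exact term_mem p m hp hm hpm hζ (L n) hcond.2.1 hcond.2.2
      · rw [MvPowerSeries.coeff_monomial_ne (Ne.symm hd), mul_zero]
        exact zero_mem _
    · rw [mul_zero]
      exact zero_mem _
  have hsum : ∑ᶠ x, f x
      = ∑ x ∈ (Finset.Iic d) ×ˢ Finset.Icc 1 (d.sum fun _ v => v), f x :=
    finsum_eq_sum_of_support_subset f hsupp
  have hWmem : xLau F * ∑ᶠ x, f x ∈ φ.range := by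
    rw [hsum, Finset.mul_sum]
    exact sum_mem fun x _ => hterm x
  have hpcast : (p : LaurentSeries F) = HahnSeries.single (0 : ℤ) ((p : F)) := by
    rw [← map_natCast (HahnSeries.C : F →+* LaurentSeries F) p, HahnSeries.C_apply]
  constructor
  · intro i hi
    rw [hco, hpcast, HahnSeries.coeff_single_zero_mul]
    have hW0 : (∑ᶠ x, f x).coeff i = 0 := by
      have h2 : (xLau F * ∑ᶠ x, f x).coeff (i + 1) = (∑ᶠ x, f x).coeff i := by
        have := HahnSeries.coeff_single_mul_add (r := (1 : F)) (x := ∑ᶠ x, f x)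
          (a := i) (b := (1 : ℤ))
        rw [one_mul] at this
        rw [xLau]
        exact this
      rw [← h2]
      exact range_coeff_neg S hWmem (by omega)
    rw [hW0, mul_zero]
  · intro i
    refine ⟨(xLau F * ∑ᶠ x, f x).coeff i, range_coeff_mem S hWmem i, ?_⟩
    rw [hco, mul_left_comm, hpcast, HahnSeries.coeff_single_zero_mul]
end

section
/- Let m ≥ 1 and M ≥ 1 be integers. In the field ℚ(q) one has the identity ∑_{ℓ=0}^{m} (−1)^ℓ q^{−ℓ(ℓ−1)/2} · \binom{m}{ℓ}_{q^{−1}} · (∑_{j=0}^{ℓ−1} q^{Mj}) = −(q^{M+1−m};q)_{m−1}, i.e. the left-hand side equals −∏_{i=0}^{m−2}(1 − q^{M+1−m+i}). -/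
/-!
STATEMENT 12: For integers `m, M ≥ 1`, in `ℚ(q)`:
`∑_{ℓ=0}^{m} (-1)^ℓ q^{-ℓ(ℓ-1)/2} · binom(m,ℓ)_{q⁻¹} · (∑_{j=0}^{ℓ-1} q^{Mj})
  = -(q^{M+1-m};q)_{m-1} = -∏_{i=0}^{m-2}(1 - q^{M+1-m+i})`.
-/

/-- `(z;ρ)_k = ∏_{i=0}^{k-1} (1 - ρ^i z)`. -/
noncomputable def pochGen (z ρ : RatFunc ℚ) (k : ℕ) : RatFunc ℚ :=
  ∏ i ∈ Finset.range k, (1 - ρ ^ i * z)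

/-- The Gaussian binomial coefficient at `q⁻¹`:
`binom(m,ℓ)_{q⁻¹} = (q⁻¹;q⁻¹)_m / ((q⁻¹;q⁻¹)_ℓ (q⁻¹;q⁻¹)_{m-ℓ})`. -/
noncomputable def qInvBinom (m ℓ : ℕ) : RatFunc ℚ :=
  pochGen (RatFunc.X)⁻¹ (RatFunc.X)⁻¹ m /
    (pochGen (RatFunc.X)⁻¹ (RatFunc.X)⁻¹ ℓ * pochGen (RatFunc.X)⁻¹ (RatFunc.X)⁻¹ (m - ℓ))

namespace St12

noncomputable def p : RatFunc ℚ := (RatFunc.X)⁻¹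

lemma X_pow_ne_one (i : ℕ) (hi : 1 ≤ i) : (RatFunc.X : RatFunc ℚ)^i ≠ 1 := by
  intro h
  have h2 : (algebraMap (Polynomial ℚ) (RatFunc ℚ)) (Polynomial.X ^ i) =
      algebraMap (Polynomial ℚ) (RatFunc ℚ) 1 := by
    simpa [map_pow, RatFunc.algebraMap_X] using h
  have h3 := IsFractionRing.injective (Polynomial ℚ) (RatFunc ℚ) h2
  have := congrArg Polynomial.natDegree h3
  simp [Polynomial.natDegree_X_pow] at this
  omega

lemma p_pow_ne_one (i : ℕ) (hi : 1 ≤ i) : p ^ i ≠ 1 := by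
  intro h
  apply X_pow_ne_one i hi
  rw [p, inv_pow, inv_eq_one] at h
  exact h

noncomputable def P (k : ℕ) : RatFunc ℚ := pochGen (RatFunc.X)⁻¹ (RatFunc.X)⁻¹ k

lemma P_eq (k : ℕ) : P k = ∏ i ∈ Finset.range k, (1 - p ^ (i+1)) := by
  unfold P pochGen
  exact Finset.prod_congr rfl fun i _ => by rw [pow_succ]; rfl

lemma P_zero : P 0 = 1 := by simp [P_eq]

lemma P_succ (k : ℕ) : P (k+1) = P k * (1 - p ^ (k+1)) := by
  rw [P_eq, P_eq, Finset.prod_range_succ]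

lemma one_sub_p_pow_ne_zero (i : ℕ) (hi : 1 ≤ i) : (1 : RatFunc ℚ) - p ^ i ≠ 0 :=
  sub_ne_zero.2 fun h => p_pow_ne_one i hi h.symm

lemma P_ne_zero (k : ℕ) : P k ≠ 0 := by
  rw [P_eq]
  exact Finset.prod_ne_zero_iff.2 fun i _ => one_sub_p_pow_ne_zero (i+1) (by omega)

lemma qInvBinom_eq (m ℓ : ℕ) : qInvBinom m ℓ = P m / (P ℓ * P (m - ℓ)) := rfl

lemma qInvBinom_zero (m : ℕ) : qInvBinom m 0 = 1 := by
  rw [qInvBinom_eq, P_zero, one_mul, Nat.sub_zero, div_self (P_ne_zero m)]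

lemma qInvBinom_self (m : ℕ) : qInvBinom m m = 1 := by
  rw [qInvBinom_eq, Nat.sub_self, P_zero, mul_one, div_self (P_ne_zero m)]

lemma pascal (m k : ℕ) (h : k < m) :
    qInvBinom (m+1) (k+1) = p ^ (m - k) * qInvBinom m k + qInvBinom m (k+1) := by
  obtain ⟨n, rfl⟩ : ∃ n, m = k + 1 + n := ⟨m - (k+1), by omega⟩
  have e1 : k + 1 + n - k = n + 1 := by omega
  have e2 : k + 1 + n - (k + 1) = n := by omega
  have e3 : k + 1 + n + 1 - (k + 1) = n + 1 := by omega
  rw [qInvBinom_eq, qInvBinom_eq, qInvBinom_eq, e1, e2, e3,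
    show k + 1 + n + 1 = (k + 1 + n) + 1 from rfl, P_succ (k+1+n), P_succ k, P_succ n]
  have hk := P_ne_zero k
  have hn := P_ne_zero n
  have hm := P_ne_zero (k+1+n)
  have h1 := one_sub_p_pow_ne_zero (k+1) (by omega)
  have h2 := one_sub_p_pow_ne_zero (n+1) (by omega)
  field_simp
  ring

lemma he (k : ℕ) : (k+1)*k/2 = k*(k-1)/2 + k := by
  rcases k with _ | k
  · simp
  · have h2 : (k+1+1)*(k+1) = (k+1)*k + 2*(k+1) := by ring
    rw [h2, Nat.add_mul_div_left _ _ (by norm_num : (0:ℕ) < 2)]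
    simp [Nat.succ_sub_one]

/-- The `q`-binomial theorem for `p = X⁻¹`. -/
lemma gauss (m : ℕ) (z : RatFunc ℚ) :
    ∑ k ∈ Finset.range (m+1), (-1 : RatFunc ℚ)^k * p ^ (k*(k-1)/2) * qInvBinom m k * z^k
      = ∏ i ∈ Finset.range m, (1 - p^i * z) := by
  induction m with
  | zero => simp [qInvBinom_self]
  | succ m ih =>
    rw [Finset.prod_range_succ, ← ih]
    rw [Finset.sum_range_succ'
      (fun k => (-1 : RatFunc ℚ)^k * p ^ (k*(k-1)/2) * qInvBinom (m+1) k * z^k)]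
    simp only [Nat.add_sub_cancel, pow_zero, Nat.zero_mul, Nat.zero_div, qInvBinom_zero,
      mul_one, one_mul]
    rw [Finset.sum_range_succ
      (fun k => (-1 : RatFunc ℚ)^(k+1) * p ^ ((k+1)*k/2) * qInvBinom (m+1) (k+1) * z^(k+1))]
    have hsplit : ∀ k ∈ Finset.range m,
        (-1 : RatFunc ℚ)^(k+1) * p ^ ((k+1)*k/2) * qInvBinom (m+1) (k+1) * z^(k+1)
        = (-1 : RatFunc ℚ)^(k+1) * p ^ (k*(k-1)/2 + m) * qInvBinom m k * z^(k+1)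
          + (-1 : RatFunc ℚ)^(k+1) * p ^ ((k+1)*k/2) * qInvBinom m (k+1) * z^(k+1) := by
      intro k hk
      rw [Finset.mem_range] at hk
      rw [pascal m k hk, he k,
        show k*(k-1)/2 + m = k*(k-1)/2 + k + (m-k) by omega, pow_add, pow_add]
      ring
    rw [Finset.sum_congr rfl hsplit, Finset.sum_add_distrib]
    rw [mul_one_sub, Finset.sum_mul, Finset.sum_range_succ
      (fun k => (-1 : RatFunc ℚ)^k * p ^ (k*(k-1)/2) * qInvBinom m k * z^k * (p^m*z))]
    rw [Finset.sum_range_succ'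
      (fun k => (-1 : RatFunc ℚ)^k * p ^ (k*(k-1)/2) * qInvBinom m k * z^k)]
    simp only [Nat.add_sub_cancel, pow_zero, Nat.zero_mul, Nat.zero_div, qInvBinom_zero,
      mul_one, one_mul]
    have hA : ∀ k ∈ Finset.range m,
        (-1 : RatFunc ℚ)^k * p ^ (k*(k-1)/2) * qInvBinom m k * z^k * (p^m*z)
        = -((-1 : RatFunc ℚ)^(k+1) * p ^ (k*(k-1)/2 + m) * qInvBinom m k * z^(k+1)) := by
      intro k _
      rw [pow_add, pow_succ (-1 : RatFunc ℚ), pow_succ z]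
      ring
    rw [Finset.sum_congr rfl hA]
    have hTm : (-1 : RatFunc ℚ)^m * p ^ (m*(m-1)/2) * qInvBinom m m * z^m * (p^m*z)
        = -((-1 : RatFunc ℚ)^(m+1) * p ^ ((m+1)*m/2) * qInvBinom (m+1) (m+1) * z^(m+1)) := by
      rw [qInvBinom_self, qInvBinom_self, he m, pow_add, pow_succ (-1 : RatFunc ℚ), pow_succ z]
      ring
    rw [hTm]
    rw [Finset.sum_neg_distrib]
    ring

end St12

open St12 in
theorem statement12 (m M : ℕ) (hm : 1 ≤ m) (hM : 1 ≤ M) :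
    ∑ ℓ ∈ Finset.range (m + 1),
      (-1 : RatFunc ℚ) ^ ℓ * RatFunc.X ^ (-((ℓ * (ℓ - 1) / 2 : ℕ) : ℤ)) *
        qInvBinom m ℓ * (∑ j ∈ Finset.range ℓ, RatFunc.X ^ (M * j)) =
    - ∏ i ∈ Finset.range (m - 1),
        (1 - RatFunc.X ^ ((M : ℤ) + 1 - (m : ℤ) + (i : ℤ))) := by
  obtain ⟨m', rfl⟩ : ∃ m', m = m' + 1 := ⟨m - 1, by omega⟩
  set w : RatFunc ℚ := RatFunc.X ^ M with hw
  have hwne : w - 1 ≠ 0 := sub_ne_zero.2 (X_pow_ne_one M hM)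
  apply mul_left_cancel₀ hwne
  rw [Finset.mul_sum]
  have hterm : ∀ ℓ ∈ Finset.range (m' + 1 + 1),
      (w - 1) * ((-1 : RatFunc ℚ) ^ ℓ * RatFunc.X ^ (-((ℓ * (ℓ - 1) / 2 : ℕ) : ℤ)) *
        qInvBinom (m'+1) ℓ * (∑ j ∈ Finset.range ℓ, RatFunc.X ^ (M * j)))
      = (-1 : RatFunc ℚ)^ℓ * p ^ (ℓ*(ℓ-1)/2) * qInvBinom (m'+1) ℓ * w^ℓ
        - (-1 : RatFunc ℚ)^ℓ * p ^ (ℓ*(ℓ-1)/2) * qInvBinom (m'+1) ℓ * (1:RatFunc ℚ)^ℓ := by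
    intro ℓ _
    have hx : (RatFunc.X : RatFunc ℚ) ^ (-((ℓ * (ℓ - 1) / 2 : ℕ) : ℤ)) = p ^ (ℓ*(ℓ-1)/2) := by
      rw [zpow_neg, zpow_natCast, ← inv_pow]; rfl
    have hg : (∑ j ∈ Finset.range ℓ, (RatFunc.X : RatFunc ℚ) ^ (M * j))
        = ∑ j ∈ Finset.range ℓ, w ^ j :=
      Finset.sum_congr rfl fun j _ => by rw [hw, ← pow_mul]
    have hgs : (w - 1) * ∑ j ∈ Finset.range ℓ, w ^ j = w ^ ℓ - 1 := by
      rw [mul_comm]; exact geom_sum_mul w ℓ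
    rw [hx, hg, one_pow]
    calc (w - 1) * ((-1 : RatFunc ℚ)^ℓ * p ^ (ℓ*(ℓ-1)/2) * qInvBinom (m'+1) ℓ *
            ∑ j ∈ Finset.range ℓ, w ^ j)
        = (-1 : RatFunc ℚ)^ℓ * p ^ (ℓ*(ℓ-1)/2) * qInvBinom (m'+1) ℓ *
            ((w - 1) * ∑ j ∈ Finset.range ℓ, w ^ j) := by ring
      _ = _ := by rw [hgs]; ring
  rw [Finset.sum_congr rfl hterm, Finset.sum_sub_distrib, gauss, gauss]
  have hz : ∏ i ∈ Finset.range (m' + 1), (1 - p ^ i * (1 : RatFunc ℚ)) = 0 :=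
    Finset.prod_eq_zero (Finset.mem_range.2 (Nat.succ_pos m')) (by simp)
  rw [hz, sub_zero]
  rw [Finset.prod_range_succ' (fun i => 1 - p ^ i * w)]
  simp only [pow_zero, one_mul, Nat.add_sub_cancel]
  have hprod : ∏ i ∈ Finset.range m',
      (1 - (RatFunc.X : RatFunc ℚ) ^ ((M : ℤ) + 1 - ((m' + 1 : ℕ) : ℤ) + (i : ℤ)))
      = ∏ i ∈ Finset.range m', (1 - p ^ (i+1) * w) := by
    rw [← Finset.prod_range_reflect
      (fun i => 1 - (RatFunc.X : RatFunc ℚ) ^ ((M : ℤ) + 1 - ((m' + 1 : ℕ) : ℤ) + (i : ℤ))) m']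
    refine Finset.prod_congr rfl fun i hi => ?_
    rw [Finset.mem_range] at hi
    have h1 : p ^ (i+1) * w = (RatFunc.X : RatFunc ℚ) ^ ((M : ℤ) - (i + 1 : ℤ)) := by
      rw [p, hw, inv_pow, ← zpow_natCast (RatFunc.X : RatFunc ℚ) (i+1), ← zpow_neg,
        ← zpow_natCast (RatFunc.X : RatFunc ℚ) M, ← zpow_add₀ RatFunc.X_ne_zero]
      congr 1
    have he2 : (M : ℤ) + 1 - ((m' + 1 : ℕ) : ℤ) + ((m' - 1 - i : ℕ) : ℤ)
        = (M : ℤ) - (i + 1 : ℤ) := by omega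
    rw [h1, he2]
  rw [hprod]
  ring
end

section
/- Let m, ℓ ≥ 1 be integers and let ζ be a primitive m-th root of unity. Consider the q-Pochhammer symbol (q;q)_{mℓ−1} = ∏_{j=1}^{mℓ−1}(1 − q^j) as an element of ℤ[ζ][[u]] via the substitution q = ζ(1−u). Then its coefficient of u^i vanishes for all i < ℓ−1, and its coefficient of u^{ℓ−1} equals m^{2ℓ−1}·(ℓ−1)!. In other words, (q;q)_{mℓ−1} = m^{2ℓ−1}(ℓ−1)!·u^{ℓ−1} + O(u^ℓ) at q = ζ(1−u). -/
/-!
STATEMENT 13: For `m, ℓ ≥ 1` and a primitive `m`-th root of unity `ζ`, the expansion of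
`(q;q)_{mℓ-1} = ∏_{j=1}^{mℓ-1}(1-q^j)` at `q = ζ(1-u)` has vanishing coefficients of
`u^i` for `i < ℓ-1`, and its coefficient of `u^{ℓ-1}` equals `m^{2ℓ-1}·(ℓ-1)!`.
-/

open Polynomial Finset

/-- `∏_{r=1}^{m-1} (1 - ζ^r) = m` for a primitive `m`-th root of unity. -/
lemma statement13_aux1 {K : Type*} [Field K] {m : ℕ} (hm : 0 < m) {ζ : K}
    (hζ : IsPrimitiveRoot ζ m) :
    ∏ r ∈ Finset.Icc 1 (m-1), (1 - ζ^r) = (m : K) := by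
  have h1 : (X : K[X]) ^ m - C 1 = ((nthRoots m (1:K)).map fun a => X - C a).prod := by
    symm
    apply prod_multiset_X_sub_C_of_monic_of_roots_card_eq (monic_X_pow_sub_C 1 hm.ne')
    rw [natDegree_X_pow_sub_C, ← nthRoots, hζ.card_nthRoots_one]
  rw [hζ.nthRoots_eq (one_pow m), Multiset.map_map] at h1
  have h2 : (X : K[X]) ^ m - C 1 = ∏ i ∈ Finset.range m, (X - C (ζ ^ i)) := by
    rw [h1, Finset.prod_eq_multiset_prod, Finset.range_val]
    simp [Function.comp]
  have hins : Finset.range m = insert 0 (Finset.Icc 1 (m-1)) := by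
    ext j; simp [Finset.mem_Icc]; omega
  rw [hins, Finset.prod_insert (by simp)] at h2
  have h3 : (∑ i ∈ Finset.range m, (X:K[X]) ^ i) * (X - 1)
      = (∏ i ∈ Finset.Icc 1 (m-1), (X - C (ζ ^ i))) * (X - 1) := by
    rw [geom_sum_mul]
    rw [show ((X:K[X])^m - 1) = X^m - C 1 by simp, h2]; simp; ring
  have h4 : (∑ i ∈ Finset.range m, (X:K[X]) ^ i)
      = ∏ i ∈ Finset.Icc 1 (m-1), (X - C (ζ ^ i)) :=
    mul_right_cancel₀ (by exact X_sub_C_ne_zero 1) (by simpa using h3)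
  have := congrArg (Polynomial.eval 1) h4
  simpa [eval_prod, eval_finset_sum] using this.symm

/-- `∏_{1 ≤ j ≤ mℓ-1, m ∤ j} (1 - ζ^j) = m^ℓ`. -/
lemma statement13_aux2 {K : Type*} [Field K] {m ℓ : ℕ} (hm : 0 < m) (hℓ : 0 < ℓ) {ζ : K}
    (hζ : IsPrimitiveRoot ζ m) :
    ∏ j ∈ (Finset.Icc 1 (m*ℓ-1)).filter (fun j => ¬ m ∣ j), (1 - ζ ^ j) = (m : K) ^ ℓ := by
  have hkey := statement13_aux1 hm hζ
  have step : ∏ j ∈ (Finset.Icc 1 (m*ℓ-1)).filter (fun j => ¬ m ∣ j), (1 - ζ ^ j)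
      = ∏ p ∈ (Finset.range ℓ) ×ˢ (Finset.Icc 1 (m-1)), (1 - ζ ^ p.2) := by
    refine Finset.prod_nbij' (fun j => (j / m, j % m)) (fun p => m * p.1 + p.2) ?_ ?_ ?_ ?_ ?_
    · intro j hj
      simp only [Finset.mem_filter, Finset.mem_Icc] at hj
      obtain ⟨⟨h1, h2⟩, hnd⟩ := hj
      have hmod : j % m ≠ 0 := fun h => hnd (Nat.dvd_of_mod_eq_zero h)
      have hmodlt : j % m < m := Nat.mod_lt _ hm
      have hjlt : j < m * ℓ := by
        have : 1 ≤ m * ℓ := Nat.one_le_iff_ne_zero.2 (by positivity)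
        omega
      have hdiv : j / m < ℓ := Nat.div_lt_of_lt_mul (by omega)
      simp only [Finset.mem_product, Finset.mem_range, Finset.mem_Icc]
      exact ⟨hdiv, by omega, by omega⟩
    · intro p hp
      simp only [Finset.mem_product, Finset.mem_range, Finset.mem_Icc] at hp
      obtain ⟨hq, hr1, hr2⟩ := hp
      simp only [Finset.mem_filter, Finset.mem_Icc]
      have hle : m * p.1 + p.2 + 1 ≤ m * ℓ := by
        calc m * p.1 + p.2 + 1 ≤ m * p.1 + m := by omega
          _ = m * (p.1 + 1) := by ring
          _ ≤ m * ℓ := Nat.mul_le_mul_left m (by omega)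
      refine ⟨⟨by omega, by omega⟩, fun hd => ?_⟩
      have : m ∣ p.2 := (Nat.dvd_add_right ⟨p.1, rfl⟩).mp hd
      have := Nat.le_of_dvd (by omega) this
      omega
    · intro j hj
      exact Nat.div_add_mod j m
    · intro p hp
      simp only [Finset.mem_product, Finset.mem_range, Finset.mem_Icc] at hp
      obtain ⟨hq, hr1, hr2⟩ := hp
      have h2 : p.2 < m := by omega
      have e1 : (m * p.1 + p.2) / m = p.1 := by
        rw [Nat.mul_add_div hm, Nat.div_eq_of_lt h2, add_zero]
      have e2 : (m * p.1 + p.2) % m = p.2 := by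
        rw [Nat.mul_add_mod, Nat.mod_eq_of_lt h2]
      rw [e1, e2]
    · intro j hj
      have := Nat.div_add_mod j m
      conv_lhs => rw [← this]
      rw [pow_add, pow_mul, hζ.pow_eq_one, one_pow, one_mul]
  rw [step, Finset.prod_product]
  simp only [hkey, Finset.prod_const, Finset.card_range]

/-- The polynomial `(q;q)_{mℓ-1}` in the variable `u`, via `q = ζ(1-u)`. -/
noncomputable def pochAtRoot (K : Type*) [Field K] (ζ : K) (n : ℕ) : Polynomial K :=
  ∏ j ∈ Finset.Icc 1 n, (1 - (Polynomial.C ζ * (1 - Polynomial.X)) ^ j)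

theorem statement13 (K : Type*) [Field K] [CharZero K] (m ℓ : ℕ) (hm : 0 < m)
    (hℓ : 0 < ℓ) (ζ : K) (hζ : IsPrimitiveRoot ζ m) :
    (∀ i : ℕ, i < ℓ - 1 → (pochAtRoot K ζ (m * ℓ - 1)).coeff i = 0) ∧
    (pochAtRoot K ζ (m * ℓ - 1)).coeff (ℓ - 1)
      = (m : K) ^ (2 * ℓ - 1) * ((ℓ - 1).factorial : K) := by
  classical
  set n := m * ℓ - 1 with hn
  set f : ℕ → K[X] := fun j => 1 - (C ζ * (1 - X)) ^ j with hf
  have hT : (Finset.Icc 1 n).filter (fun j => m ∣ j)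
      = Finset.image (fun k => m * k) (Finset.Icc 1 (ℓ - 1)) := by
    ext j
    simp only [Finset.mem_filter, Finset.mem_Icc, Finset.mem_image]
    constructor
    · rintro ⟨⟨h1, h2⟩, k, rfl⟩
      refine ⟨k, ⟨?_, ?_⟩, rfl⟩
      · rcases Nat.eq_zero_or_pos k with rfl | h
        · simp at h1
        · exact h
      · have : m * k < m * ℓ := by omega
        have := Nat.lt_of_mul_lt_mul_left this
        omega
    · rintro ⟨k, ⟨hk1, hk2⟩, rfl⟩
      have h1 : 1 ≤ m * k := Nat.one_le_iff_ne_zero.2 (by positivity)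
      have h2 : m * (k + 1) ≤ m * ℓ := Nat.mul_le_mul_left m (by omega)
      exact ⟨⟨h1, by rw [Nat.mul_add] at h2; omega⟩, k, rfl⟩
  have hinj : Set.InjOn (fun k => m * k) (Finset.Icc 1 (ℓ - 1)) := fun a _ b _ h => by
    exact Nat.eq_of_mul_eq_mul_left hm h
  set g : ℕ → K[X] := fun k => ∑ i ∈ Finset.range (m * k), (1 - X) ^ i with hg
  have hfg : ∀ k, f (m * k) = X * g k := by
    intro k
    have h := geom_sum_mul (1 - X : K[X]) (m * k)
    have hz : (ζ : K) ^ (m * k) = 1 := by rw [pow_mul, hζ.pow_eq_one, one_pow]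
    simp only [hf, hg, mul_pow, ← C_pow, hz, map_one, one_mul]
    linear_combination h
  have hsplit : pochAtRoot K ζ n
      = X ^ (ℓ - 1) * ((∏ k ∈ Finset.Icc 1 (ℓ - 1), g k)
          * ∏ j ∈ (Finset.Icc 1 n).filter (fun j => ¬ m ∣ j), f j) := by
    rw [pochAtRoot, ← Finset.prod_filter_mul_prod_filter_not (Finset.Icc 1 n) (fun j => m ∣ j)]
    rw [hT, Finset.prod_image hinj]
    have : ∏ k ∈ Finset.Icc 1 (ℓ - 1), f (m * k)
        = X ^ (ℓ - 1) * ∏ k ∈ Finset.Icc 1 (ℓ - 1), g k := by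
      simp only [hfg]
      rw [Finset.prod_mul_distrib, Finset.prod_const, Nat.card_Icc]
      norm_num
    rw [show (∏ k ∈ Finset.Icc 1 (ℓ-1), (1 - (C ζ * (1 - X)) ^ (m * k)))
        = ∏ k ∈ Finset.Icc 1 (ℓ-1), f (m*k) from rfl, this]
    ring
  constructor
  · intro i hi
    rw [hsplit, mul_comm, Polynomial.coeff_mul_X_pow', if_neg (by omega)]
  · rw [hsplit, mul_comm, Polynomial.coeff_mul_X_pow', if_pos le_rfl, Nat.sub_self,
      Polynomial.coeff_zero_eq_eval_zero, eval_mul, eval_prod, eval_prod]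
    have hgval : ∀ k, Polynomial.eval 0 (g k) = ((m * k : ℕ) : K) := by
      intro k
      simp [hg, eval_finset_sum]
    have hfval : ∀ j, Polynomial.eval 0 (f j) = 1 - ζ ^ j := by
      intro j
      simp [hf]
    have hprod1 : ∏ k ∈ Finset.Icc 1 (ℓ - 1), Polynomial.eval 0 (g k)
        = (m : K) ^ (ℓ - 1) * ((ℓ - 1).factorial : K) := by
      simp only [hgval]
      push_cast
      rw [Finset.prod_mul_distrib, Finset.prod_const, Nat.card_Icc]
      norm_num
      left
      rw [← Nat.cast_prod]
      congr 1
      rw [show Finset.Icc 1 (ℓ - 1) = Finset.Ico 1 ((ℓ - 1) + 1) by rw [Finset.Ico_add_one_right_eq_Icc]]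
      exact Finset.prod_Ico_id_eq_factorial (ℓ - 1)
    have hprod2 : ∏ j ∈ (Finset.Icc 1 n).filter (fun j => ¬ m ∣ j), Polynomial.eval 0 (f j)
        = (m : K) ^ ℓ := by
      simp only [hfval]
      exact statement13_aux2 hm hℓ hζ
    rw [hprod1, hprod2, show 2 * ℓ - 1 = (ℓ - 1) + ℓ by omega, pow_add]
    ring
end

section
/- Let p ≥ 5 be a prime, s ≥ 1, and let F be a finite field with p^s elements. Define the finite dilogarithm li₂: F → F by li₂(x) = ∑_{k=1}^{p−1} (k²)^{−1} x^k, where k² is inverted in the prime field 𝔽_p ⊆ F. Then the 𝔽_p-linear span of the set { li₂(x)·(x−1)^{−p} : x ∈ F, x ≠ 1 } is all of F. -/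
/-!
STATEMENT 15: Let `p ≥ 5` be prime and `F` a finite field with `p^s` elements.  With the
finite dilogarithm `li₂(x) = ∑_{k=1}^{p-1} k⁻² x^k`, the `𝔽_p`-linear span of
`{ li₂(x)·(x-1)^{-p} : x ∈ F, x ≠ 1 }` is all of `F`.
-/

open Polynomial Finset

theorem statement15 (p s : ℕ) (hp : p.Prime) (h5 : 5 ≤ p) (hs : 1 ≤ s)
    (F : Type*) [Field F] [Fintype F] [Algebra (ZMod p) F]
    (hcard : Fintype.card F = p ^ s) :
    Submodule.span (ZMod p)
      {y : F | ∃ x : F, x ≠ 1 ∧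
        y = (∑ k ∈ Finset.Icc 1 (p - 1), ((k : F) ^ 2)⁻¹ * x ^ k) * ((x - 1) ^ p)⁻¹}
      = ⊤ := by
  classical
  haveI : Fact p.Prime := ⟨hp⟩
  haveI : CharP F p := charP_of_injective_algebraMap (algebraMap (ZMod p) F).injective p
  by_contra hV
  set S : Set F := {y : F | ∃ x : F, x ≠ 1 ∧
      y = (∑ k ∈ Finset.Icc 1 (p - 1), ((k : F) ^ 2)⁻¹ * x ^ k) * ((x - 1) ^ p)⁻¹} with hSdef
  set V : Submodule (ZMod p) F := Submodule.span (ZMod p) S with hVdef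
  -- the sum of inverse squares vanishes
  have hZ : ∑ k ∈ Finset.Icc 1 (p - 1), (((k : ZMod p)) ^ 2)⁻¹ = 0 := by
    have hbij : ∑ k ∈ Finset.Icc 1 (p - 1), (((k : ZMod p)) ^ 2)⁻¹
        = ∑ x ∈ Finset.univ.erase (0 : ZMod p), (x ^ 2)⁻¹ := by
      refine Finset.sum_nbij' (fun k => ((k : ZMod p))) (fun x => x.val) ?_ ?_ ?_ ?_ ?_
      · intro k hk
        obtain ⟨hk1, hk2⟩ := Finset.mem_Icc.mp hk
        refine Finset.mem_erase.mpr ⟨?_, Finset.mem_univ _⟩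
        rw [Ne, ZMod.natCast_eq_zero_iff]
        intro hdvd
        have := Nat.le_of_dvd (by omega) hdvd
        omega
      · intro x hx
        have hx0 : x ≠ 0 := Finset.ne_of_mem_erase hx
        refine Finset.mem_Icc.mpr ⟨?_, ?_⟩
        · have := ZMod.val_pos.mpr hx0
          omega
        · have := ZMod.val_lt x
          omega
      · intro k hk
        obtain ⟨hk1, hk2⟩ := Finset.mem_Icc.mp hk
        exact ZMod.val_cast_of_lt (by omega)
      · intro x hx
        exact ZMod.natCast_rightInverse x
      · intro k hk
        rfl
    have hstep : ∑ x ∈ Finset.univ.erase (0 : ZMod p), (x ^ 2)⁻¹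
        = ∑ x ∈ Finset.univ.erase (0 : ZMod p), x ^ (p - 3) := by
      refine Finset.sum_congr rfl ?_
      intro x hx
      have hx0 : x ≠ 0 := Finset.ne_of_mem_erase hx
      have h1 : x ^ 2 * x ^ (p - 3) = 1 := by
        rw [← pow_add]
        have h23 : 2 + (p - 3) = p - 1 := by omega
        rw [h23]
        exact ZMod.pow_card_sub_one_eq_one hx0
      exact inv_eq_of_mul_eq_one_right h1
    have hext : ∑ x ∈ Finset.univ.erase (0 : ZMod p), x ^ (p - 3)
        = ∑ x : ZMod p, x ^ (p - 3) := by
      apply Finset.sum_erase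
      exact zero_pow (by omega)
    have hzero : ∑ x : ZMod p, x ^ (p - 3) = 0 := by
      apply FiniteField.sum_pow_lt_card_sub_one
      rw [ZMod.card]
      omega
    rw [hbij, hstep, hext, hzero]
  have hsum0F : ∑ k ∈ Finset.Icc 1 (p - 1), ((k : F) ^ 2)⁻¹ = 0 := by
    have hmap := congrArg (algebraMap (ZMod p) F) hZ
    rw [map_sum, map_zero] at hmap
    simpa [map_inv₀, map_pow, map_natCast] using hmap
  -- the polynomial h
  set h : Polynomial F :=
    ∑ k ∈ Finset.Icc 1 (p - 1),
      Polynomial.C (((k : F) ^ 2)⁻¹) * ((Polynomial.X + 1) ^ k * Polynomial.X ^ (p - k))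
    with hhdef
  -- coefficient at p vanishes
  have hcoeffp : h.coeff p = 0 := by
    have hcp : h.coeff p = ∑ k ∈ Finset.Icc 1 (p - 1), ((k : F) ^ 2)⁻¹ := by
      rw [hhdef, Polynomial.finset_sum_coeff]
      refine Finset.sum_congr rfl ?_
      intro k hk
      obtain ⟨hk1, hk2⟩ := Finset.mem_Icc.mp hk
      rw [Polynomial.coeff_C_mul, Polynomial.coeff_mul_X_pow', if_pos (Nat.sub_le _ _),
        Nat.sub_sub_self (by omega : k ≤ p), Polynomial.coeff_X_add_one_pow,
        Nat.choose_self, Nat.cast_one, mul_one]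
    rw [hcp, hsum0F]
  -- coefficient at 1 is 1
  have hcoeff1 : h.coeff 1 = 1 := by
    rw [hhdef, Polynomial.finset_sum_coeff]
    rw [Finset.sum_eq_single (p - 1)]
    · rw [Polynomial.coeff_C_mul, Polynomial.coeff_mul_X_pow',
        if_pos (by omega : p - (p - 1) ≤ 1)]
      have h11 : 1 - (p - (p - 1)) = 0 := by omega
      rw [h11, Polynomial.coeff_X_add_one_pow, Nat.choose_zero_right, Nat.cast_one, mul_one]
      have hm1 : ((p - 1 : ℕ) : F) = -1 := by
        rw [Nat.cast_sub hp.one_le, Nat.cast_one, CharP.cast_eq_zero F p, zero_sub]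
      rw [hm1]
      norm_num
    · intro k hk hne
      obtain ⟨hk1, hk2⟩ := Finset.mem_Icc.mp hk
      rw [Polynomial.coeff_C_mul, Polynomial.coeff_mul_X_pow',
        if_neg (by omega : ¬ p - k ≤ 1), mul_zero]
    · intro hmem
      exact absurd (Finset.mem_Icc.mpr ⟨by omega, le_refl _⟩) hmem
  have hne : h ≠ 0 := fun h0 => by simp [h0] at hcoeff1
  -- degree bounds
  have hdegle : h.natDegree ≤ p := by
    rw [hhdef]
    refine (Polynomial.natDegree_sum_le _ _).trans ?_
    rw [Finset.fold_max_le]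
    refine ⟨by omega, ?_⟩
    intro k hk
    obtain ⟨hk1, hk2⟩ := Finset.mem_Icc.mp hk
    refine le_trans (Polynomial.natDegree_C_mul_le _ _) ?_
    refine le_trans Polynomial.natDegree_mul_le ?_
    have h1 : ((Polynomial.X + 1 : F[X]) ^ k).natDegree ≤ k := by
      refine le_trans Polynomial.natDegree_pow_le ?_
      have hX1 : (Polynomial.X + 1 : F[X]).natDegree = 1 := by
        rw [← Polynomial.C_1, Polynomial.natDegree_X_add_C]
      rw [hX1, mul_one]
    have h2 : ((Polynomial.X : F[X]) ^ (p - k)).natDegree ≤ p - k := by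
      refine le_trans Polynomial.natDegree_pow_le ?_
      rw [Polynomial.natDegree_X, mul_one]
    omega
  have hdeg : h.natDegree ≤ p - 1 := by
    rw [Polynomial.natDegree_le_iff_coeff_eq_zero]
    intro m hm
    rcases eq_or_lt_of_le (show p ≤ m by omega) with rfl | hlt
    · exact hcoeffp
    · exact Polynomial.coeff_eq_zero_of_natDegree_lt (lt_of_le_of_lt hdegle hlt)
  have hdegpos : 1 ≤ h.natDegree :=
    Polynomial.le_natDegree_of_ne_zero (by rw [hcoeff1]; exact one_ne_zero)
  -- all values of h lie in V
  have heval_mem : ∀ u : F, h.eval u ∈ V := by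
    intro u
    have hev : h.eval u
        = ∑ k ∈ Finset.Icc 1 (p - 1), ((k : F) ^ 2)⁻¹ * ((u + 1) ^ k * u ^ (p - k)) := by
      rw [hhdef]
      simp [Polynomial.eval_finset_sum]
    by_cases hu : u = 0
    · subst hu
      have h0 : h.eval 0 = 0 := by
        rw [hev]
        apply Finset.sum_eq_zero
        intro k hk
        obtain ⟨hk1, hk2⟩ := Finset.mem_Icc.mp hk
        have hz : (0 : F) ^ (p - k) = 0 := zero_pow (by omega)
        simp [hz]
      rw [h0]
      exact V.zero_mem
    · apply Submodule.subset_span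
      refine ⟨1 + u⁻¹, ?_, ?_⟩
      · simp [hu]
      · rw [hev]
        rw [show (1 + u⁻¹ - 1 : F) = u⁻¹ by ring, ← inv_pow, inv_inv, Finset.sum_mul]
        refine Finset.sum_congr rfl ?_
        intro k hk
        obtain ⟨hk1, hk2⟩ := Finset.mem_Icc.mp hk
        have hup : u ^ p = u ^ k * u ^ (p - k) := by
          rw [← pow_add]
          congr 1
          omega
        have h2 : (1 + u⁻¹) ^ k * u ^ k = (u + 1) ^ k := by
          rw [← mul_pow]
          congr 1
          field_simp
        rw [hup, ← h2]
        ring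
  -- counting argument
  have hxV : ∃ x : F, x ∉ V := by
    by_contra hall
    push_neg at hall
    exact hV (Submodule.eq_top_iff'.mpr hall)
  obtain ⟨x₀, hx₀⟩ := hxV
  set T : Finset F := (Set.toFinite (V : Set F)).toFinset with hTdef
  have hmemT : ∀ z : F, z ∈ T ↔ z ∈ V := by
    intro z
    rw [hTdef, Set.Finite.mem_toFinset]
    rfl
  have hTcard_lt : T.card < p ^ s := by
    rw [← hcard]
    exact Finset.card_lt_univ_of_notMem (fun hmem => hx₀ ((hmemT x₀).mp hmem))
  have hTdvd : T.card ∣ p ^ s := by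
    have h1 : Nat.card V.toAddSubgroup ∣ Nat.card F :=
      AddSubgroup.card_addSubgroup_dvd_card _
    have h2 : Nat.card V.toAddSubgroup = T.card := by
      rw [hTdef, ← Set.ncard_eq_toFinset_card (V : Set F) (Set.toFinite _),
        ← Nat.card_coe_set_eq]
      rfl
    rwa [h2, Nat.card_eq_fintype_card, hcard] at h1
  have hTle : T.card ≤ p ^ (s - 1) := by
    obtain ⟨i, hi, hTc⟩ := (Nat.dvd_prime_pow hp).mp hTdvd
    have his : i ≤ s - 1 := by
      rcases Nat.lt_or_ge i s with hlt | hge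
      · omega
      · exfalso
        rw [hTc] at hTcard_lt
        exact absurd (Nat.pow_le_pow_right hp.pos hge) (by omega)
    rw [hTc]
    exact Nat.pow_le_pow_right hp.pos his
  set A : Polynomial F := ∏ w ∈ T, (Polynomial.X - Polynomial.C w) with hAdef
  have hAdeg : A.natDegree = T.card := by
    rw [hAdef, Polynomial.natDegree_prod]
    · simp [Polynomial.natDegree_X_sub_C]
    · intro w _
      exact Polynomial.X_sub_C_ne_zero w
  set Q : Polynomial F := A.comp h with hQdef
  have hQdeg : Q.natDegree = T.card * h.natDegree := by
    rw [hQdef, Polynomial.natDegree_comp, hAdeg]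
  have hT0 : (0 : F) ∈ T := (hmemT 0).mpr V.zero_mem
  have hTpos : 0 < T.card := Finset.card_pos.mpr ⟨0, hT0⟩
  have hQne : Q ≠ 0 := by
    intro h0
    rw [h0, Polynomial.natDegree_zero] at hQdeg
    have := Nat.mul_pos hTpos (by omega : 0 < h.natDegree)
    omega
  have hQeval : ∀ u : F, Q.eval u = 0 := by
    intro u
    rw [hQdef, Polynomial.eval_comp, hAdef, Polynomial.eval_prod]
    apply Finset.prod_eq_zero ((hmemT _).mpr (heval_mem u))
    simp
  have hQzero := Polynomial.eq_zero_of_natDegree_lt_card_of_eval_eq_zero' Q Finset.univ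
    (fun x _ => hQeval x) ?_
  · exact hQne hQzero
  · rw [Finset.card_univ, hcard, hQdeg]
    calc T.card * h.natDegree ≤ p ^ (s - 1) * (p - 1) := Nat.mul_le_mul hTle hdeg
      _ < p ^ (s - 1) * p :=
        Nat.mul_lt_mul_of_pos_left (by omega) (pow_pos hp.pos (s - 1))
      _ = p ^ s := by rw [← pow_succ]; congr 1; omega
end

section
/- For every integer n ≥ 1, the product ∏_{m ∣ n} |disc(Φ_m)| of the absolute values of the discriminants of the cyclotomic polynomials Φ_m, taken over all positive divisors m of n, divides n^n, and the quotient n^n / ∏_{m∣n} |disc(Φ_m)| is a perfect square. (Hence D₂(n) := n^{n/2} · ∏_{m∣n} |disc(Φ_m)|^{−1/2} is a positive integer.) -/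
/-!
STATEMENT 16: For `n ≥ 1`, the product over the divisors `m` of `n` of the absolute
values of the discriminants of the cyclotomic polynomials `Φ_m` divides `n^n`, and the
quotient is a perfect square.  Here `|disc(Φ_m)|` is expressed as the absolute value of
the product of the differences of all ordered pairs of distinct primitive `m`-th roots
of unity in `ℂ` (the roots of the monic polynomial `Φ_m`, which are simple).
-/

/-- `|disc(Φ_m)| = |∏_{ζ ≠ ζ'} (ζ - ζ')|`, the product over ordered pairs of distinct
primitive `m`-th roots of unity in `ℂ`. -/
noncomputable def absDiscCyclotomic (m : ℕ) : ℝ :=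
  ‖∏ ζ ∈ primitiveRoots m ℂ, ∏ ζ' ∈ (primitiveRoots m ℂ).erase ζ, (ζ - ζ')‖

open Polynomial Finset

lemma exists_int_prod (b : ℕ+) (p : Polynomial ℤ) :
    ∃ z : ℤ, (z : ℂ) = ∏ ζ ∈ primitiveRoots (b : ℕ) ℂ, (Polynomial.aeval ζ) p := by
  let K := CyclotomicField b ℚ
  haveI : NeZero (b : ℕ) := ⟨b.ne_zero⟩
  haveI : NeZero ((b : ℕ) : ℚ) := ⟨by exact_mod_cast b.ne_zero⟩
  haveI : IsCyclotomicExtension {(b : ℕ)} ℚ K := CyclotomicField.isCyclotomicExtension _ _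
  have hζ := IsCyclotomicExtension.zeta_spec b ℚ K
  have hirr : Irreducible (cyclotomic (b : ℕ) ℚ) := cyclotomic.irreducible_rat b.pos
  let e := hζ.embeddingsEquivPrimitiveRoots ℂ hirr
  haveI : FiniteDimensional ℚ K := IsCyclotomicExtension.finiteDimensional {(b : ℕ)} ℚ K
  set x : K := Polynomial.aeval (IsCyclotomicExtension.zeta b ℚ K) p with hx
  have hxint : IsIntegral ℤ x := by
    refine IsIntegral.of_mem_of_fg _ (hζ.isIntegral b.pos).fg_adjoin_singleton _ ?_
    rw [Algebra.adjoin_singleton_eq_range_aeval]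
    exact ⟨p, rfl⟩
  have hnormint : IsIntegral ℤ (Algebra.norm ℚ x) := Algebra.isIntegral_norm ℚ hxint
  obtain ⟨z, hz⟩ := IsIntegrallyClosed.isIntegral_iff.mp hnormint
  refine ⟨z, ?_⟩
  have key := Algebra.norm_eq_prod_embeddings ℚ ℂ x
  have : ∏ ζ ∈ primitiveRoots (b : ℕ) ℂ, (Polynomial.aeval ζ) p
      = ∏ σ : K →ₐ[ℚ] ℂ, σ x := by
    rw [← Finset.prod_coe_sort]
    rw [← Equiv.prod_comp e (fun ζ => (Polynomial.aeval (ζ : ℂ)) p)]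
    refine Fintype.prod_congr _ _ fun σ => ?_
    rw [hζ.embeddingsEquivPrimitiveRoots_apply_coe, hx]
    exact Polynomial.aeval_algHom_apply (σ.restrictScalars ℤ) _ p
  rw [this, ← key, ← hz]
  simp


lemma prod_erase_nthRoots (n : ℕ) (hn : 0 < n) {ζ : ℂ}
    (hζ : ζ ∈ nthRootsFinset n (1 : ℂ)) :
    ∏ ζ' ∈ (nthRootsFinset n (1 : ℂ)).erase ζ, (ζ - ζ') = n * ζ ^ (n - 1) := by
  have hprim := Complex.isPrimitiveRoot_exp n hn.ne'
  have h1 : (X : ℂ[X]) ^ n - 1 = ∏ ζ' ∈ nthRootsFinset n (1 : ℂ), (X - C ζ') :=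
    X_pow_sub_one_eq_prod hn hprim
  have hζv : ζ ∈ (nthRootsFinset n (1 : ℂ)).val := hζ
  have key := Polynomial.eval_multiset_prod_X_sub_C_derivative (S := (nthRootsFinset n (1 : ℂ)).val) hζv
  have h2 : (Multiset.map (fun a => (X : ℂ[X]) - C a) (nthRootsFinset n (1 : ℂ)).val).prod
      = (X : ℂ[X]) ^ n - 1 := by
    rw [h1]; rfl
  rw [h2] at key
  have h3 : derivative ((X : ℂ[X]) ^ n - 1) = C (n : ℂ) * X ^ (n - 1) := by
    simp [derivative_X_pow]
  rw [h3] at key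
  have h4 : eval ζ (C (n : ℂ) * X ^ (n - 1)) = n * ζ ^ (n - 1) := by simp
  rw [h4] at key
  rw [key]
  rw [← Finset.erase_val]
  rfl

lemma abs_mem_nthRoots (n : ℕ) (hn : 0 < n) {ζ : ℂ} (hζ : ζ ∈ nthRootsFinset n (1 : ℂ)) :
    ‖ζ‖ = 1 := by
  have h := (Polynomial.mem_nthRootsFinset hn 1).mp hζ
  have : ‖ζ‖ ^ n = 1 := by rw [← norm_pow, h, norm_one]
  have h0 : (0:ℝ) ≤ ‖ζ‖ := norm_nonneg ζ
  by_contra hne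
  rcases lt_or_gt_of_ne hne with h | h
  · have := pow_lt_one₀ h0 h hn.ne'
    linarith
  · have := one_lt_pow₀ h hn.ne'
    linarith


lemma prod_offDiag_eq {M : Type*} [CommMonoid M] (s : Finset ℕ) (f : ℕ → ℕ → M) :
    ∏ p ∈ s.offDiag, f p.1 p.2 = ∏ a ∈ s, ∏ b ∈ s.erase a, f a b := by
  classical
  have h : s.offDiag = s.biUnion fun a => (s.erase a).image fun b => (a, b) := by
    ext ⟨x, y⟩
    simp only [mem_offDiag, mem_biUnion, mem_image, mem_erase, Prod.mk.injEq]
    constructor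
    · rintro ⟨hx, hy, hne⟩
      exact ⟨x, hx, y, ⟨fun h => hne h.symm, hy⟩, rfl, rfl⟩
    · rintro ⟨a, ha, b, ⟨hba, hb⟩, rfl, rfl⟩
      exact ⟨ha, hb, fun h => hba h.symm⟩
  rw [h, Finset.prod_biUnion]
  · refine Finset.prod_congr rfl fun a _ => ?_
    rw [Finset.prod_image]
    intro b _ c _ h
    exact (Prod.mk.injEq _ _ _ _).mp h |>.2
  · intro a _ a' _ haa'
    simp only [Finset.disjoint_left, mem_image]
    rintro ⟨x, y⟩ ⟨b, _, h1⟩ ⟨c, _, h2⟩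
    exact haa' (((Prod.mk.injEq _ _ _ _).mp h1 |>.1).trans ((Prod.mk.injEq _ _ _ _).mp h2 |>.1).symm)

lemma isSquare_prod_offDiag (s : Finset ℕ) (g : ℕ → ℕ → ℕ)
    (hsym : ∀ a ∈ s, ∀ b ∈ s, g a b = g b a) :
    IsSquare (∏ p ∈ s.offDiag, g p.1 p.2) := by
  classical
  refine ⟨∏ p ∈ s.offDiag.filter fun p => p.1 < p.2, g p.1 p.2, ?_⟩
  rw [← Finset.prod_filter_mul_prod_filter_not s.offDiag (fun p => p.1 < p.2)]
  congr 1
  refine Finset.prod_nbij' (fun p => (p.2, p.1)) (fun p => (p.2, p.1)) ?_ ?_ ?_ ?_ ?_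
  · rintro ⟨a, b⟩ hp
    simp only [mem_filter, mem_offDiag] at hp ⊢
    obtain ⟨⟨ha, hb, hne⟩, hlt⟩ := hp
    exact ⟨⟨hb, ha, fun h => hne h.symm⟩, lt_of_le_of_ne (not_lt.mp hlt) (fun h => hne h.symm)⟩
  · rintro ⟨a, b⟩ hp
    simp only [mem_filter, mem_offDiag] at hp ⊢
    obtain ⟨⟨ha, hb, hne⟩, hlt⟩ := hp
    exact ⟨⟨hb, ha, fun h => hne h.symm⟩, not_lt.mpr hlt.le⟩
  · rintro ⟨a, b⟩ _; rfl
  · rintro ⟨a, b⟩ _; rfl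
  · rintro ⟨a, b⟩ hp
    simp only [mem_filter, mem_offDiag] at hp
    exact (hsym b hp.1.2.1 a hp.1.1).symm

noncomputable def Gfun (a b : ℕ) : ℝ :=
  ∏ ζ ∈ primitiveRoots a ℂ, ∏ ζ' ∈ primitiveRoots b ℂ, ‖ζ - ζ'‖

lemma Gfun_symm (a b : ℕ) : Gfun a b = Gfun b a := by
  rw [Gfun, Finset.prod_comm, Gfun]
  exact Finset.prod_congr rfl fun x _ => Finset.prod_congr rfl fun y _ =>
    norm_sub_rev y x

lemma exists_nat_G (a b : ℕ) (ha : 0 < a) (hb : 0 < b) :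
    ∃ w : ℕ, (w : ℝ) = Gfun a b := by
  obtain ⟨z, hz⟩ := exists_int_prod ⟨b, hb⟩ (cyclotomic a ℤ)
  refine ⟨z.natAbs, ?_⟩
  have hprima := Complex.isPrimitiveRoot_exp a ha.ne'
  have hcyclo : ∀ ζ' : ℂ, (Polynomial.aeval ζ') (cyclotomic a ℤ)
      = ∏ ζ ∈ primitiveRoots a ℂ, (ζ' - ζ) := by
    intro ζ'
    rw [Polynomial.aeval_def, Polynomial.eval₂_eq_eval_map, map_cyclotomic,
      cyclotomic_eq_prod_X_sub_primitiveRoots hprima, Polynomial.eval_prod]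
    simp
  have habs : ‖(z : ℂ)‖ = Gfun a b := by
    rw [hz]
    rw [norm_prod]
    rw [Gfun, Finset.prod_comm]
    refine Finset.prod_congr rfl fun ζ' _ => ?_
    rw [hcyclo ζ', norm_prod]
    exact Finset.prod_congr rfl fun ζ _ => norm_sub_rev ζ' ζ
  rw [← habs]
  rw [Complex.norm_intCast, Nat.cast_natAbs, Int.cast_abs]

theorem statement16 (n : ℕ) (hn : 1 ≤ n) :
    ∃ k : ℕ, IsSquare k ∧
      (∏ m ∈ n.divisors, absDiscCyclotomic m) * (k : ℝ) = (n : ℝ) ^ n := by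
  classical
  have npos : 0 < n := hn
  set D := n.divisors with hD
  set P : ℕ → Finset ℂ := fun a => primitiveRoots a ℂ with hP
  set R := nthRootsFinset n (1 : ℂ) with hRdef
  have hprim := Complex.isPrimitiveRoot_exp n npos.ne'
  have hR : R = D.biUnion P := IsPrimitiveRoot.nthRoots_one_eq_biUnion_primitiveRoots
  -- choose the integer weights
  have hw : ∀ a b : ℕ, 0 < a → 0 < b → ∃ w : ℕ, (w : ℝ) = Gfun a b := exists_nat_G
  let g : ℕ → ℕ → ℕ := fun a b =>
    if h : 0 < a ∧ 0 < b then (hw a b h.1 h.2).choose else 0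
  have hg : ∀ a b : ℕ, 0 < a → 0 < b → (g a b : ℝ) = Gfun a b := by
    intro a b ha hb
    simp only [g, dif_pos (⟨ha, hb⟩ : 0 < a ∧ 0 < b)]
    exact (hw a b ha hb).choose_spec
  have hgsym : ∀ a ∈ D, ∀ b ∈ D, g a b = g b a := by
    intro a ha b hb
    have ha' := Nat.pos_of_mem_divisors ha
    have hb' := Nat.pos_of_mem_divisors hb
    have : (g a b : ℝ) = (g b a : ℝ) := by
      rw [hg a b ha' hb', hg b a hb' ha', Gfun_symm]
    exact_mod_cast this
  refine ⟨∏ p ∈ D.offDiag, g p.1 p.2, isSquare_prod_offDiag D g hgsym, ?_⟩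
  -- the key computation
  have hPdisj : ∀ a b : ℕ, a ≠ b → Disjoint (P a) (P b) := fun a b h =>
    IsPrimitiveRoot.disjoint h
  -- |A| = n^n
  have habsA : ‖∏ ζ ∈ R, ∏ ζ' ∈ R.erase ζ, (ζ - ζ')‖ = (n : ℝ) ^ n := by
    rw [norm_prod]
    have : ∀ ζ ∈ R, ‖∏ ζ' ∈ R.erase ζ, (ζ - ζ')‖ = (n : ℝ) := by
      intro ζ hζ
      rw [prod_erase_nthRoots n npos hζ, norm_mul, norm_pow, abs_mem_nthRoots n npos hζ]
      simp
    rw [Finset.prod_congr rfl this, Finset.prod_const, hprim.card_nthRootsFinset]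
  -- split A along the biUnion
  have hsplitζ : ∀ a ∈ D, ∀ ζ ∈ P a,
      ∏ ζ' ∈ R.erase ζ, (ζ - ζ')
        = (∏ ζ' ∈ (P a).erase ζ, (ζ - ζ')) * ∏ b ∈ D.erase a, ∏ ζ' ∈ P b, (ζ - ζ') := by
    intro a ha ζ hζ
    have hset : R.erase ζ = ((P a).erase ζ) ∪ ((D.erase a).biUnion P) := by
      ext x
      simp only [Finset.mem_erase, hR, Finset.mem_biUnion, Finset.mem_union]
      constructor
      · rintro ⟨hxζ, b, hb, hxb⟩
        by_cases hba : b = a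
        · subst hba; exact Or.inl ⟨hxζ, hxb⟩
        · exact Or.inr ⟨b, ⟨hba, hb⟩, hxb⟩
      · rintro (⟨hxζ, hxa⟩ | ⟨b, ⟨hba, hb⟩, hxb⟩)
        · exact ⟨hxζ, a, ha, hxa⟩
        · refine ⟨?_, b, hb, hxb⟩
          rintro rfl
          exact (Finset.disjoint_left.mp (hPdisj b a hba) hxb) hζ
    have hdisj : Disjoint ((P a).erase ζ) ((D.erase a).biUnion P) := by
      rw [Finset.disjoint_left]
      intro x hx hx'
      obtain ⟨b, hb, hxb⟩ := Finset.mem_biUnion.mp hx'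
      exact Finset.disjoint_left.mp (hPdisj a b fun h => (Finset.mem_erase.mp hb).1 h.symm)
        (Finset.mem_of_mem_erase hx) hxb
    rw [hset, Finset.prod_union hdisj, Finset.prod_biUnion]
    intro b hb b' hb' hbb'
    exact (hPdisj b b' hbb').mono (le_refl _) (le_refl _)
  have hA : (∏ ζ ∈ R, ∏ ζ' ∈ R.erase ζ, (ζ - ζ'))
      = ∏ a ∈ D, ((∏ ζ ∈ P a, ∏ ζ' ∈ (P a).erase ζ, (ζ - ζ'))
          * ∏ b ∈ D.erase a, ∏ ζ ∈ P a, ∏ ζ' ∈ P b, (ζ - ζ')) := by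
    rw [hR, Finset.prod_biUnion (fun a ha b hb hab => hPdisj a b hab)]
    refine Finset.prod_congr rfl fun a ha => ?_
    rw [← hR]
    rw [Finset.prod_congr rfl (hsplitζ a ha), Finset.prod_mul_distrib, Finset.prod_comm]
  -- take absolute values
  rw [hA, norm_prod] at habsA
  have habs2 : ∀ a ∈ D,
      ‖(∏ ζ ∈ P a, ∏ ζ' ∈ (P a).erase ζ, (ζ - ζ'))
          * ∏ b ∈ D.erase a, ∏ ζ ∈ P a, ∏ ζ' ∈ P b, (ζ - ζ')‖
      = absDiscCyclotomic a * ∏ b ∈ D.erase a, Gfun a b := by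
    intro a _
    rw [norm_mul]
    congr 1
    rw [norm_prod]
    refine Finset.prod_congr rfl fun b _ => ?_
    rw [norm_prod, Gfun]
    exact Finset.prod_congr rfl fun ζ _ => norm_prod _ _
  rw [Finset.prod_congr rfl habs2, Finset.prod_mul_distrib] at habsA
  rw [← habsA]
  congr 1
  have hcast := prod_offDiag_eq (M := ℝ) D fun a b => ((g a b : ℝ))
  rw [Nat.cast_prod, hcast]
  refine Finset.prod_congr rfl fun a ha => Finset.prod_congr rfl fun b hb => ?_
  exact hg a b (Nat.pos_of_mem_divisors ha)
    (Nat.pos_of_mem_divisors (Finset.mem_of_mem_erase hb))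
end
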